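/- arXiv:2203.10549 — 6 statements merged into one kernel-verified Lean document; each statement's English description precedes it below -/
import Mathlib

section
/- Let A be a finite-dimensional self-injective k-algebra over a field k, and let X be a finitely generated A-module. Then the subspace P(X,X) of End_A(X) consisting of endomorphisms that factor through a projective module is contained in the Jacobson radical of End_A(X) if and only if X has no nonzero projective direct summand. -/
/-- For a finite-dimensional self-injective `k`-algebra `A` and a finitely
generated `A`-module `X`, the subspace `P(X,X)` of endomorphisms factoring through a
projective module is contained in the Jacobson radical of `End_A(X)` iff `X` has no
nonzero projective direct summand. -/
theorem stmt0 (k A : Type) [Field k] [Ring A] [Algebra k A] [FiniteDimensional k A]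
    (hself : Module.Injective A A)
    (X : Type) [AddCommGroup X] [Module A X] [Module.Finite A X] :
    (∀ f : Module.End A X,
      (∃ (P : Type) (_ : AddCommGroup P) (_ : Module A P), Module.Projective A P ∧
        ∃ (α : X →ₗ[A] P) (β : P →ₗ[A] X), (f : X →ₗ[A] X) = β ∘ₗ α) →
      f ∈ Ideal.jacobson (⊥ : Ideal (Module.End A X)))
    ↔ ¬ ∃ (P Q : Type) (_ : AddCommGroup P) (_ : Module A P)
          (_ : AddCommGroup Q) (_ : Module A Q),
        Module.Projective A P ∧ Nontrivial P ∧ Nonempty (X ≃ₗ[A] P × Q) := by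
  classical
  letI : Module k X := Module.compHom X (algebraMap k A)
  haveI : IsScalarTower k A X := ⟨fun c a x => by
    rw [Algebra.smul_def, mul_smul]; rfl⟩
  haveI : Module.Finite k X := Module.Finite.trans A X
  haveI : IsNoetherian A X := isNoetherian_of_tower k inferInstance
  haveI : IsArtinian A X := isArtinian_of_tower k inferInstance
  constructor
  · rintro hJ ⟨P, Q, _, _, _, _, hP, hPnt, ⟨φ⟩⟩
    set α : X →ₗ[A] P := (LinearMap.fst A P Q) ∘ₗ φ.toLinearMap with hα
    set β : P →ₗ[A] X := φ.symm.toLinearMap ∘ₗ (LinearMap.inl A P Q) with hβ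
    set e : Module.End A X := β ∘ₗ α with he
    have hee : e * e = e := by
      ext x; simp [he, hα, hβ, Module.End.mul_eq_comp]
    have hmem := hJ e ⟨P, inferInstance, inferInstance, hP, α, β, rfl⟩
    obtain ⟨z, hz⟩ := Ideal.mem_jacobson_iff.mp hmem (-1)
    rw [Ideal.mem_bot, mul_neg_one, neg_mul] at hz
    have h2 : z - z * e - 1 = 0 := by rw [← hz]; abel
    rw [sub_eq_zero] at h2
    have he0 : e = 0 := by
      have h3 : (z - z * e) * e = e := by rw [h2, one_mul]
      rw [sub_mul, mul_assoc, hee, sub_self] at h3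
      exact h3.symm
    obtain ⟨p, q, hpq⟩ := hPnt
    have key : ∀ v : P, α (e (β v)) = v := by
      intro v; simp [he, hα, hβ]
    have h4 := key (p - q)
    rw [he0] at h4
    simp only [LinearMap.zero_apply, map_zero] at h4
    exact hpq (by rwa [eq_comm, sub_eq_zero] at h4)
  · rintro hnp f ⟨P, iP1, iP2, hP, α, β, hf⟩
    by_contra hfJ
    rw [Ideal.mem_jacobson_iff] at hfJ
    push_neg at hfJ
    obtain ⟨y, hy⟩ := hfJ
    set g : Module.End A X := y * f with hg
    have hgnil : ¬ IsNilpotent g := by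
      rintro hnil
      obtain ⟨u, hu⟩ := hnil.isUnit_add_one
      refine hy ↑u⁻¹ ?_
      rw [Ideal.mem_bot, sub_eq_zero, mul_assoc, ← hg]
      calc (↑u⁻¹ : Module.End A X) * g + ↑u⁻¹ = ↑u⁻¹ * (g + 1) := by rw [mul_add, mul_one]
        _ = 1 := by rw [← hu, Units.inv_mul]
    -- Fitting decomposition
    obtain ⟨n₁, hn₁⟩ := Filter.eventually_atTop.mp
      (LinearMap.eventually_isCompl_ker_pow_range_pow (g : X →ₗ[A] X))
    obtain ⟨n₂, hn₂⟩ := IsArtinian.monotone_stabilizes (g : X →ₗ[A] X).iterateRange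
    set N : ℕ := max n₁ n₂ + 1 with hN
    set h : Module.End A X := g ^ N with hh
    have hcompl : IsCompl (LinearMap.ker h) (LinearMap.range h) :=
      hn₁ N (le_trans (le_max_left _ _) (Nat.le_succ _))
    have hrangestab : LinearMap.range ((g : X →ₗ[A] X) ^ N) =
        LinearMap.range ((g : X →ₗ[A] X) ^ (2 * N)) := by
      have e1 := hn₂ N (le_trans (le_max_right _ _) (Nat.le_succ _))
      have e2 := hn₂ (2 * N) (by rw [hN]; omega)
      exact e1.symm.trans e2
    set Y : Submodule A X := LinearMap.range h with hY
    have hmapY : ∀ x ∈ Y, h x ∈ Y := fun x _ => LinearMap.mem_range_self h x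
    set u : Y →ₗ[A] Y := (h : X →ₗ[A] X).restrict hmapY with hu
    have hinj : Function.Injective u := by
      rintro ⟨x, hx⟩ ⟨x', hx'⟩ hxx
      have : h (x - x') = 0 := by
        have := congrArg (Subtype.val) hxx
        simp only [hu, LinearMap.restrict_apply] at this
        simp [map_sub, this]
      have hker : x - x' ∈ LinearMap.ker h := this
      have hrange : x - x' ∈ Y := Y.sub_mem hx hx'
      have : x - x' = 0 := by
        have := hcompl.disjoint.le_bot ⟨hker, hrange⟩
        simpa using this
      exact Subtype.ext (by rwa [sub_eq_zero] at this)
    have hsurj : Function.Surjective u := by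
      rintro ⟨x, hx⟩
      have : x ∈ LinearMap.range ((g : X →ₗ[A] X) ^ (2 * N)) := by
        rw [← hrangestab]; exact hx
      obtain ⟨w, hw⟩ := this
      have h2N : (g : X →ₗ[A] X) ^ (2 * N) = ((g : X →ₗ[A] X) ^ N) ∘ₗ ((g : X →ₗ[A] X) ^ N) := by
        rw [two_mul, pow_add]; rfl
      refine ⟨⟨((g : X →ₗ[A] X) ^ N) w, LinearMap.mem_range_self _ _⟩, Subtype.ext ?_⟩
      simp only [hu, LinearMap.restrict_apply]
      rw [← hw, h2N]; rfl
    set eY : Y ≃ₗ[A] Y := LinearEquiv.ofBijective u ⟨hinj, hsurj⟩ with heY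
    -- factor h through P
    set M : ℕ := max n₁ n₂ with hM
    have hNM : N = M + 1 := rfl
    set B : P →ₗ[A] X := ((g ^ M * y : Module.End A X) : X →ₗ[A] X) ∘ₗ β with hB
    have hfact : (h : X →ₗ[A] X) = B ∘ₗ α := by
      have : h = g ^ M * y * f := by
        rw [hh, hNM, pow_succ, hg, mul_assoc]
      rw [this]
      show ((g ^ M * y : Module.End A X) : X →ₗ[A] X) ∘ₗ (f : X →ₗ[A] X) = B ∘ₗ α
      rw [hf, hB, LinearMap.comp_assoc]
    set s : Y →ₗ[A] P := α ∘ₗ Y.subtype with hs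
    set r : P →ₗ[A] Y :=
      eY.symm.toLinearMap ∘ₗ (Submodule.projectionOnto Y (LinearMap.ker h) hcompl.symm)
        ∘ₗ B with hr
    have hsplit : r ∘ₗ s = LinearMap.id := by
      ext ⟨x, hx⟩
      have h1 : B (α x) = h x := by
        rw [← LinearMap.comp_apply, ← hfact]
      simp only [hr, hs, LinearMap.comp_apply, LinearMap.coe_comp, Function.comp_apply,
        Submodule.coe_subtype, LinearMap.id_coe, id_eq, LinearEquiv.coe_coe]
      rw [h1]
      have h2 : h x = ((u ⟨x, hx⟩ : Y) : X) := by
        simp [hu, LinearMap.restrict_apply]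
      rw [h2, Submodule.projectionOnto_apply_left hcompl.symm (u ⟨x, hx⟩)]
      have : u ⟨x, hx⟩ = eY ⟨x, hx⟩ := rfl
      rw [this, LinearEquiv.symm_apply_apply]
    haveI := hP
    have hYproj : Module.Projective A Y := Module.Projective.of_split s r hsplit
    have hYnt : Nontrivial Y := by
      rw [Submodule.nontrivial_iff_ne_bot, hY, Ne, LinearMap.range_eq_bot]
      intro h0
      exact hgnil ⟨N, h0⟩
    exact hnp ⟨Y, LinearMap.ker h, inferInstance, inferInstance, inferInstance, inferInstance,
      hYproj, hYnt, ⟨(Submodule.prodEquivOfIsCompl Y (LinearMap.ker h) hcompl.symm).symm⟩⟩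
end

section
/- Let A be a finite-dimensional self-injective k-algebra with no simple projective modules, Y an indecomposable non-projective finitely generated A-module, and L a simple A-module. Then L embeds as a submodule of Y if and only if the stable Hom space Hom_A(L,Y)/P(L,Y) is nonzero. -/
/-- A product of injective modules is injective. -/
lemma pi_injective {R : Type} [Ring R] {ι : Type} (M : ι → Type)
    [∀ i, AddCommGroup (M i)] [∀ i, Module R (M i)]
    (h : ∀ i, Module.Injective R (M i)) : Module.Injective R (∀ i, M i) := by
  refine ⟨fun X Y _ _ _ _ f hf g => ?_⟩
  choose h' hh using fun i => (h i).out f hf ((LinearMap.proj i).comp g)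
  exact ⟨LinearMap.pi h', fun x => funext fun i => hh i x⟩

/-- Over a finite-dimensional self-injective `k`-algebra with no simple
projective modules, a simple module `L` embeds into an indecomposable non-projective
finitely generated module `Y` iff the stable Hom space `Hom(L,Y)/P(L,Y)` is nonzero,
i.e. iff some homomorphism `L → Y` does not factor through a projective module. -/
theorem stmt5 (k A : Type) [Field k] [Ring A] [Algebra k A] [FiniteDimensional k A]
    (hself : Module.Injective A A)
    (hnsp : ∀ (S : Type) [AddCommGroup S] [Module A S],
        IsSimpleModule A S → ¬ Module.Projective A S)
    (Y : Type) [AddCommGroup Y] [Module A Y] [Module.Finite A Y]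
    (hYind : Nontrivial Y ∧
      ∀ (P Q : Submodule A Y), IsCompl P Q → P = ⊥ ∨ Q = ⊥)
    (hYnp : ¬ Module.Projective A Y)
    (L : Type) [AddCommGroup L] [Module A L] (hL : IsSimpleModule A L) :
    (∃ f : L →ₗ[A] Y, Function.Injective f) ↔
    (∃ f : L →ₗ[A] Y, ¬ ∃ (Q : Type) (_ : AddCommGroup Q) (_ : Module A Q),
        Module.Projective A Q ∧ ∃ (α : L →ₗ[A] Q) (β : Q →ₗ[A] Y), f = β ∘ₗ α) := by
  haveI := hL
  haveI : Nontrivial L := IsSimpleModule.nontrivial A L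
  haveI : IsNoetherianRing A := isNoetherian_of_tower k inferInstance
  haveI : IsArtinianRing A := IsArtinianRing.of_finite k A
  constructor
  · rintro ⟨i, hi⟩
    refine ⟨i, ?_⟩
    rintro ⟨Q, _, _, hQproj, α, β, hfac⟩
    -- `s` splits `Q` off the free module `Q →₀ A`
    obtain ⟨s, hs⟩ := (Module.projective_def).mp hQproj
    -- a generator of the simple module `L`
    obtain ⟨x₀, hx₀⟩ := exists_ne (0 : L)
    have hspan : Submodule.span A ({x₀} : Set L) = ⊤ := by
      rcases hL.1.2 (Submodule.span A {x₀}) with h | h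
      · exact absurd (Submodule.span_eq_bot.mp h x₀ rfl) hx₀
      · exact h
    set T : Finset Q := (s (α x₀)).support with hT
    -- the embedding into the injective module `Q → A`
    set e : L →ₗ[A] (Q → A) :=
      (LinearMap.pi fun q => Finsupp.lapply q) ∘ₗ (s ∘ₗ α) with he
    -- the retraction `(Q → A) → Q` using the finite set `T`
    set σ : (Q → A) →ₗ[A] Q :=
      { toFun := fun w => ∑ t ∈ T, w t • t
        map_add' := by
          intro w₁ w₂
          simp [add_smul, Finset.sum_add_distrib]
        map_smul' := by
          intro a w
          simp [Pi.smul_apply, smul_eq_mul, mul_smul, Finset.smul_sum] } with hσ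
    -- key: σ ∘ e = α
    have hσe : ∀ l : L, σ (e l) = α l := by
      intro l
      have hl : l ∈ Submodule.span A ({x₀} : Set L) := hspan ▸ Submodule.mem_top
      obtain ⟨a, rfl⟩ := Submodule.mem_span_singleton.mp hl
      have hsupp : (s (α (a • x₀))).support ⊆ T := by
        rw [map_smul, map_smul]
        exact Finsupp.support_smul
      have : σ (e (a • x₀)) = ∑ t ∈ T, (s (α (a • x₀))) t • t := rfl
      rw [this]
      have hsum : ∑ t ∈ T, (s (α (a • x₀))) t • t
          = Finsupp.linearCombination A id (s (α (a • x₀))) := by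
        rw [Finsupp.linearCombination_apply, Finsupp.sum]
        refine (Finset.sum_subset hsupp ?_).symm
        intro t _ ht
        rw [Finsupp.notMem_support_iff.mp ht, zero_smul]
      rw [hsum, hs (α (a • x₀))]
    -- extend e along i using injectivity of the product module
    have hinj : Module.Injective A (Q → A) := pi_injective _ (fun _ => hself)
    obtain ⟨γ, hγ⟩ := hinj.out i hi e
    -- the endomorphism φ of Y
    set φ : Y →ₗ[A] Y := (β ∘ₗ σ) ∘ₗ γ with hφ
    have hφi : ∀ l : L, φ (i l) = i l := by
      intro l
      have : φ (i l) = β (σ (γ (i l))) := rfl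
      rw [this, hγ, hσe]
      rw [hfac]; rfl
    have hφpow : ∀ (n : ℕ) (l : L), (φ ^ n) (i l) = i l := by
      intro n
      induction n with
      | zero => intro l; rfl
      | succ m ih =>
        intro l
        rw [pow_succ']
        have : (φ * φ ^ m) (i l) = φ ((φ ^ m) (i l)) := rfl
        rw [this, ih, hφi]
    -- Fitting's lemma
    obtain ⟨n, hn⟩ := Filter.eventually_atTop.mp
      (LinearMap.eventually_isCompl_ker_pow_range_pow φ)
    set m : ℕ := max n 1 with hm
    have hcompl := hn m (le_max_left _ _)
    rcases hYind.2 _ _ hcompl with hker | hrange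
    · -- kernel of φ^m is trivial, so φ is bijective and Y is a summand of Q
      have hrange_top : LinearMap.range (φ ^ m) = ⊤ := by
        have := hcompl.codisjoint
        rw [codisjoint_iff, hker, bot_sup_eq] at this
        exact this
      obtain ⟨m', hm'⟩ : ∃ m', m = m' + 1 :=
        ⟨m - 1, (Nat.succ_pred_eq_of_pos (lt_of_lt_of_le Nat.zero_lt_one (le_max_right n 1))).symm⟩
      have hφsurj : Function.Surjective φ := by
        intro y
        have hy : y ∈ LinearMap.range (φ ^ m) := hrange_top ▸ Submodule.mem_top
        obtain ⟨x, hx⟩ := hy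
        refine ⟨(φ ^ m') x, ?_⟩
        have : (φ ^ m) x = φ ((φ ^ m') x) := by rw [hm', pow_succ']; rfl
        rw [← this, hx]
      have hφinj : Function.Injective φ := by
        have hkm : Function.Injective (φ ^ m) := LinearMap.ker_eq_bot.mp hker
        intro a b hab
        apply hkm
        rw [hm', pow_succ]
        show (φ ^ m') (φ a) = (φ ^ m') (φ b)
        rw [hab]
      -- Y is a retract of Q
      set E := LinearEquiv.ofBijective φ ⟨hφinj, hφsurj⟩ with hE
      have : Module.Projective A Y := by
        refine Module.Projective.of_split (M := Q) (σ ∘ₗ γ ∘ₗ (E.symm : Y →ₗ[A] Y)) β ?_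
        ext y
        simp only [LinearMap.comp_apply, LinearMap.id_apply, LinearEquiv.coe_coe]
        have : β (σ (γ (E.symm y))) = φ (E.symm y) := rfl
        rw [this]
        exact E.apply_symm_apply y
      exact hYnp this
    · -- range of φ^m is trivial: contradiction with φ^m (i x₀) = i x₀ ≠ 0
      have : (φ ^ m) (i x₀) = 0 := by
        have := LinearMap.range_eq_bot.mp hrange
        rw [this]; rfl
      rw [hφpow m x₀] at this
      exact hx₀ (hi (by rw [this, map_zero]))
  · rintro ⟨f, hf⟩
    refine ⟨f, ?_⟩
    have hf0 : f ≠ 0 := by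
      rintro rfl
      exact hf ⟨PUnit, inferInstance, inferInstance, inferInstance, 0, 0, by ext x; rfl⟩
    rcases hL.1.2 (LinearMap.ker f) with h | h
    · exact LinearMap.ker_eq_bot.mp h
    · exact absurd (LinearMap.ker_eq_top.mp h) hf0
end

section
/- Let C and C' be abelian monoidal categories over a field k in which every object has finite length, with the tensor product of C' exact in each variable and length multiplicative on simples of C' (i.e., length(X ⊗ Y) ≥ length(X)·length(Y)). Let F : C → C' be an exact k-linear monoidal functor. If L is a simple object of C whose left dual L* satisfies L* ⊗ L ≅ 1, then F(L) is a simple object of C'. -/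
open CategoryTheory MonoidalCategory

/-- Let `C`, `C'` be abelian monoidal categories over a field `k` with all
objects of finite length, the tensor product of `C'` exact in each variable and length
super-multiplicative on `C'` (`ℓ(X ⊗ Y) ≥ ℓ X * ℓ Y`).  If `F : C ⥤ C'` is an exact
`k`-linear monoidal functor and `L` is a simple object of `C` whose left dual satisfies
`L* ⊗ L ≅ 𝟙`, then `F(L)` is simple.  The length function `ℓ` on `C'` is axiomatised:
it is iso-invariant, vanishes exactly on zero objects, and detects simples. -/
theorem stmt8 (k : Type) [Field k]
    (C C' : Type) [Category C] [Category C'] [Abelian C] [Abelian C']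
    [Linear k C] [Linear k C']
    [MonoidalCategory C] [MonoidalCategory C']
    [∀ X : C', Limits.PreservesFiniteLimits (tensorLeft X)]
    [∀ X : C', Limits.PreservesFiniteColimits (tensorLeft X)]
    [∀ X : C', Limits.PreservesFiniteLimits (tensorRight X)]
    [∀ X : C', Limits.PreservesFiniteColimits (tensorRight X)]
    (ℓ : C' → ℕ)
    (hiso : ∀ X Y : C', (X ≅ Y) → ℓ X = ℓ Y)
    (hzero : ∀ X : C', ℓ X = 0 ↔ Limits.IsZero X)
    (hsimple : ∀ X : C', Simple X ↔ ℓ X = 1)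
    (hmul : ∀ X Y : C', ℓ X * ℓ Y ≤ ℓ (X ⊗ Y))
    (hunit : Simple (𝟙_ C'))
    (F : C ⥤ C') [F.Additive] [F.Linear k] [F.Monoidal]
    [Limits.PreservesFiniteLimits F] [Limits.PreservesFiniteColimits F]
    (L : C) (hL : Simple L)
    (Ldual : C) (hdual : Nonempty (Ldual ⊗ L ≅ 𝟙_ C)) :
    Simple (F.obj L) := by
  obtain ⟨e⟩ := hdual
  have key : ℓ (F.obj Ldual ⊗ F.obj L) = 1 := by
    have h1 : ℓ (F.obj Ldual ⊗ F.obj L) = ℓ (𝟙_ C') :=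
      hiso _ _ ((Functor.Monoidal.μIso F Ldual L).trans
        ((F.mapIso e).trans (Functor.Monoidal.εIso F).symm))
    rw [h1, ← hsimple]; exact hunit
  have hmul' := hmul (F.obj Ldual) (F.obj L)
  rw [key] at hmul'
  have hLnz : ℓ (F.obj L) ≠ 0 := by
    intro h0
    have hz : Limits.IsZero (F.obj L) := (hzero _).mp h0
    have : Limits.IsZero (F.obj Ldual ⊗ F.obj L) :=
      (tensorLeft (F.obj Ldual)).map_isZero hz
    rw [← hzero, key] at this
    exact one_ne_zero this
  have hDnz : ℓ (F.obj Ldual) ≠ 0 := by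
    intro h0
    have hz : Limits.IsZero (F.obj Ldual) := (hzero _).mp h0
    have : Limits.IsZero (F.obj Ldual ⊗ F.obj L) :=
      (tensorRight (F.obj L)).map_isZero hz
    rw [← hzero, key] at this
    exact one_ne_zero this
  rw [hsimple]
  have h1 : ℓ (F.obj L) ≤ ℓ (F.obj Ldual) * ℓ (F.obj L) :=
    Nat.le_mul_of_pos_left _ (Nat.pos_of_ne_zero hDnz)
  omega
end

section
/- Let I and J be finite sets, and for each i ∈ I and j ∈ J let a_i, b_i, c_j, d_j be positive real numbers. Suppose for each i ∈ I there is a nonempty subset J_i ⊆ J with ∪_{i∈I} J_i = J, and suppose a_i ≥ Σ_{j∈J_i} c_j and b_i ≥ Σ_{j∈J_i} d_j for all i. If Σ_{i∈I} a_i b_i = Σ_{j∈J} c_j d_j, then every J_i is a singleton, the map φ : I → J with J_i = {φ(i)} is surjective, and a_i = c_{φ(i)}, b_i = d_{φ(i)} for all i ∈ I. -/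
/-- the numerical core of the Frobenius–Perron dimension count.  If
`a i ≥ ∑_{j ∈ J i} c j`, `b i ≥ ∑_{j ∈ J i} d j`, all quantities are positive, the
nonempty sets `J i` cover `J`, and `∑ a i * b i = ∑ c j * d j`, then every `J i` is a
singleton `{φ i}` with `φ` surjective and `a i = c (φ i)`, `b i = d (φ i)`. -/
theorem stmt12 (I J : Type) [Fintype I] [Fintype J] [DecidableEq J]
    (a b : I → ℝ) (c d : J → ℝ)
    (ha : ∀ i, 0 < a i) (hb : ∀ i, 0 < b i)
    (hc : ∀ j, 0 < c j) (hd : ∀ j, 0 < d j)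
    (Ji : I → Finset J) (hne : ∀ i, (Ji i).Nonempty)
    (hcover : ∀ j : J, ∃ i : I, j ∈ Ji i)
    (hac : ∀ i, (∑ j ∈ Ji i, c j) ≤ a i)
    (hbd : ∀ i, (∑ j ∈ Ji i, d j) ≤ b i)
    (heq : ∑ i : I, a i * b i = ∑ j : J, c j * d j) :
    ∃ φ : I → J, (∀ i, Ji i = {φ i}) ∧ Function.Surjective φ ∧
      ∀ i, a i = c (φ i) ∧ b i = d (φ i) := by
  classical
  set g : J → ℝ := fun j => c j * d j with hg
  have hSpos : ∀ i, 0 < ∑ j ∈ Ji i, c j := fun i =>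
    Finset.sum_pos (fun j _ => hc j) (hne i)
  have hTpos : ∀ i, 0 < ∑ j ∈ Ji i, d j := fun i =>
    Finset.sum_pos (fun j _ => hd j) (hne i)
  have h1 : ∀ i, (∑ j ∈ Ji i, g j) ≤ (∑ j ∈ Ji i, c j) * (∑ j ∈ Ji i, d j) := by
    intro i
    rw [Finset.sum_mul]
    refine Finset.sum_le_sum fun j hj => ?_
    exact mul_le_mul_of_nonneg_left
      (Finset.single_le_sum (fun k _ => (hd k).le) hj) (hc j).le
  have h2 : ∀ i, (∑ j ∈ Ji i, c j) * (∑ j ∈ Ji i, d j) ≤ a i * b i := fun i =>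
    mul_le_mul (hac i) (hbd i) (hTpos i).le (ha i).le
  have h12 : ∀ i ∈ Finset.univ (α := I), (∑ j ∈ Ji i, g j) ≤ a i * b i :=
    fun i _ => (h1 i).trans (h2 i)
  have h3 : (∑ j : J, g j) ≤ ∑ i : I, ∑ j ∈ Ji i, g j := by
    have hrw : ∀ i, (∑ j ∈ Ji i, g j) = ∑ j : J, if j ∈ Ji i then g j else 0 := by
      intro i
      rw [Finset.sum_ite_mem, Finset.univ_inter]
    simp_rw [hrw]
    rw [Finset.sum_comm]
    refine Finset.sum_le_sum fun j _ => ?_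
    obtain ⟨i0, hi0⟩ := hcover j
    have hgnn : 0 ≤ g j := (mul_pos (hc j) (hd j)).le
    have := Finset.single_le_sum
      (f := fun i : I => if j ∈ Ji i then g j else 0)
      (fun i _ => by by_cases h : j ∈ Ji i <;> simp [h, hgnn]) (Finset.mem_univ i0)
    simpa [hi0] using this
  have htot : (∑ i : I, ∑ j ∈ Ji i, g j) = ∑ i : I, a i * b i :=
    le_antisymm (Finset.sum_le_sum h12) (heq ▸ h3)
  have hpt : ∀ i, (∑ j ∈ Ji i, g j) = a i * b i := fun i =>
    (Finset.sum_eq_sum_iff_of_le h12).mp htot i (Finset.mem_univ i)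
  have hST : ∀ i, (∑ j ∈ Ji i, g j) = (∑ j ∈ Ji i, c j) * (∑ j ∈ Ji i, d j) :=
    fun i => le_antisymm (h1 i) (by rw [hpt i]; exact h2 i)
  have hab : ∀ i, (∑ j ∈ Ji i, c j) * (∑ j ∈ Ji i, d j) = a i * b i :=
    fun i => (hST i).symm.trans (hpt i)
  have hsing : ∀ i, ∃ j, Ji i = {j} := by
    intro i
    obtain ⟨j0, hj0⟩ := hne i
    refine ⟨j0, ?_⟩
    rcases eq_or_lt_of_le (Finset.one_le_card.mpr (hne i)) with hcard | hcard
    · obtain ⟨x, hx⟩ := Finset.card_eq_one.mp hcard.symm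
      rw [hx] at hj0 ⊢
      simpa using (Finset.mem_singleton.mp hj0) ▸ rfl
    · exfalso
      have hdlt : ∀ j ∈ Ji i, d j < ∑ k ∈ Ji i, d k := by
        intro j hj
        obtain ⟨k, hk, hkj⟩ := Finset.exists_mem_ne hcard j
        calc d j = ∑ m ∈ {j}, d m := by simp
          _ < ∑ k ∈ Ji i, d k :=
            Finset.sum_lt_sum_of_subset (Finset.singleton_subset_iff.mpr hj) hk
              (by simpa using hkj) (hd k) (fun m _ _ => (hd m).le)
      have hlt : (∑ j ∈ Ji i, g j) < (∑ j ∈ Ji i, c j) * (∑ j ∈ Ji i, d j) := by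
        rw [Finset.sum_mul]
        exact Finset.sum_lt_sum_of_nonempty (hne i)
          (fun j hj => mul_lt_mul_of_pos_left (hdlt j hj) (hc j))
      exact absurd (hST i) hlt.ne
  choose φ hφ using hsing
  have hS : ∀ i, (∑ j ∈ Ji i, c j) = c (φ i) := fun i => by rw [hφ i, Finset.sum_singleton]
  have hT : ∀ i, (∑ j ∈ Ji i, d j) = d (φ i) := fun i => by rw [hφ i, Finset.sum_singleton]
  have haeq : ∀ i, a i = c (φ i) := by
    intro i
    rw [← hS i]
    by_contra h
    have hlt : (∑ j ∈ Ji i, c j) < a i := lt_of_le_of_ne (hac i) (Ne.symm h)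
    have : (∑ j ∈ Ji i, c j) * (∑ j ∈ Ji i, d j) < a i * b i :=
      calc (∑ j ∈ Ji i, c j) * (∑ j ∈ Ji i, d j)
          < a i * (∑ j ∈ Ji i, d j) := mul_lt_mul_of_pos_right hlt (hTpos i)
        _ ≤ a i * b i := mul_le_mul_of_nonneg_left (hbd i) (ha i).le
    exact absurd (hab i) this.ne
  have hbeq : ∀ i, b i = d (φ i) := by
    intro i
    rw [← hT i]
    by_contra h
    have hlt : (∑ j ∈ Ji i, d j) < b i := lt_of_le_of_ne (hbd i) (Ne.symm h)
    have : (∑ j ∈ Ji i, c j) * (∑ j ∈ Ji i, d j) < a i * b i :=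
      calc (∑ j ∈ Ji i, c j) * (∑ j ∈ Ji i, d j)
          < (∑ j ∈ Ji i, c j) * b i := mul_lt_mul_of_pos_left hlt (hSpos i)
        _ ≤ a i * b i := mul_le_mul_of_nonneg_right (hac i) (hb i).le
    exact absurd (hab i) this.ne
  refine ⟨φ, hφ, ?_, fun i => ⟨haeq i, hbeq i⟩⟩
  intro j
  obtain ⟨i, hi⟩ := hcover j
  rw [hφ i, Finset.mem_singleton] at hi
  exact ⟨i, hi.symm⟩
end

section
/- Let A and A' be finite-dimensional self-injective k-algebras with no simple projective modules, and let F : A-mod → A'-mod be a k-linear functor preserving projectives inducing a stable equivalence. For a simple A-module L and a simple A'-module L', let Φ(L) denote the non-projective part of F(L) and Ψ(L') the corresponding module under the inverse bijection. Then L is a submodule of Ψ(L') if and only if L' is a quotient module of Φ(L). -/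
open CategoryTheory

/-- The stable relation: maps are identified when their difference factors through a
projective module. -/
def stableRel (A : Type) [Ring A] : HomRel (ModuleCat.{0} A) :=
  fun {X Y} f g => ∃ (P : ModuleCat.{0} A) (α : X ⟶ P) (β : P ⟶ Y),
    Projective P ∧ f = g + α ≫ β

/-- An indecomposable module. -/
def Indec {A : Type} [Ring A] (X : ModuleCat.{0} A) : Prop :=
  ¬ Limits.IsZero X ∧ ∀ Y Z : ModuleCat.{0} A,
    Nonempty (X ≅ Y ⊞ Z) → Limits.IsZero Y ∨ Limits.IsZero Z

section Part0
variable {A : Type} [Ring A]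

/-- factors through a projective -/
def sFac {X Y : ModuleCat.{0} A} (f : X ⟶ Y) : Prop :=
  ∃ (P : ModuleCat.{0} A) (α : X ⟶ P) (β : P ⟶ Y), Projective P ∧ f = α ≫ β

lemma stableRel_iff {X Y : ModuleCat.{0} A} (f g : X ⟶ Y) :
    stableRel A f g ↔ sFac (f - g) := by
  constructor
  · rintro ⟨P, α, β, hP, h⟩; exact ⟨P, α, β, hP, by rw [h]; abel⟩
  · rintro ⟨P, α, β, hP, h⟩; exact ⟨P, α, β, hP, by rw [← h]; abel⟩

lemma sFac_zero {X Y : ModuleCat.{0} A} : sFac (0 : X ⟶ Y) := by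
  refine ⟨ModuleCat.of A PUnit, 0, 0, ?_, by simp⟩
  have hz : Limits.IsZero (ModuleCat.of A PUnit) := ModuleCat.isZero_of_subsingleton _
  constructor
  intro E Xc f e he
  exact ⟨0, hz.eq_of_src _ _⟩

lemma sFac_add {X Y : ModuleCat.{0} A} {f g : X ⟶ Y} (hf : sFac f) (hg : sFac g) :
    sFac (f + g) := by
  obtain ⟨P, α, β, hP, rfl⟩ := hf
  obtain ⟨Q, γ, δ, hQ, rfl⟩ := hg
  refine ⟨P ⊞ Q, Limits.biprod.lift α γ, Limits.biprod.desc β δ, ?_, by simp⟩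
  haveI := hP; haveI := hQ; infer_instance

lemma sFac_neg {X Y : ModuleCat.{0} A} {f : X ⟶ Y} (hf : sFac f) : sFac (-f) := by
  obtain ⟨P, α, β, hP, rfl⟩ := hf
  exact ⟨P, -α, β, hP, by simp⟩

lemma sFac_comp_left {X Y Z : ModuleCat.{0} A} {f : Y ⟶ Z} (hf : sFac f) (g : X ⟶ Y) :
    sFac (g ≫ f) := by
  obtain ⟨P, α, β, hP, rfl⟩ := hf
  exact ⟨P, g ≫ α, β, hP, by simp⟩

lemma sFac_comp_right {X Y Z : ModuleCat.{0} A} {f : X ⟶ Y} (hf : sFac f) (g : Y ⟶ Z) :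
    sFac (f ≫ g) := by
  obtain ⟨P, α, β, hP, rfl⟩ := hf
  exact ⟨P, α, β ≫ g, hP, by simp⟩

instance stableRel_congruence : Congruence (stableRel A) where
  equivalence := by
    refine fun {X Y} => ⟨?_, ?_, ?_⟩
    · intro f; rw [stableRel_iff]; simpa using sFac_zero
    · intro f g h; rw [stableRel_iff] at *; simpa using sFac_neg h
    · intro f g h h1 h2; rw [stableRel_iff] at *
      simpa using sFac_add h1 h2
  comp_left := by
    intro X Y Z f g g' h
    rw [stableRel_iff] at *
    simpa [Preadditive.comp_sub] using sFac_comp_left h f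
  comp_right := by
    intro X Y Z f f' g h
    rw [stableRel_iff] at *
    simpa [Preadditive.sub_comp] using sFac_comp_right h g

end Part0

section Part2
variable {A : Type} [Ring A]

lemma sFac_iff_rel_zero {X Y : ModuleCat.{0} A} (f : X ⟶ Y) :
    stableRel A f 0 ↔ sFac f := by
  rw [stableRel_iff]; simp

def SZ {A : Type} [Ring A] (X Y : ModuleCat.{0} A) : Prop := ∀ f : X ⟶ Y, sFac f

lemma SZ_iff_quot (X Y : ModuleCat.{0} A) :
    SZ X Y ↔ ∀ φ : (Quotient.functor (stableRel A)).obj X ⟶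
      (Quotient.functor (stableRel A)).obj Y,
      φ = (Quotient.functor (stableRel A)).map (0 : X ⟶ Y) := by
  constructor
  · intro h φ
    obtain ⟨f, rfl⟩ := (Quotient.functor (stableRel A)).map_surjective φ
    rw [Quotient.functor_map_eq_iff, sFac_iff_rel_zero]
    exact h f
  · intro h f
    rw [← sFac_iff_rel_zero, ← Quotient.functor_map_eq_iff (stableRel A)]
    exact h _

lemma forall_eq_of_fullyFaithful {C D : Type*} [CategoryTheory.Category C]
    [CategoryTheory.Category D] (H : CategoryTheory.Functor C D) [H.Full] [H.Faithful]
    {X Y : C} (ξ : X ⟶ Y) :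
    (∀ φ : X ⟶ Y, φ = ξ) ↔ ∀ ψ : H.obj X ⟶ H.obj Y, ψ = H.map ξ := by
  constructor
  · intro h ψ
    obtain ⟨f, rfl⟩ := H.map_surjective ψ
    rw [h f]
  · intro h φ
    exact H.map_injective (h (H.map φ))

lemma forall_eq_transport {D : Type*} [CategoryTheory.Category D] {a a' b b' : D}
    (ha : a = a') (hb : b = b') (ξ : a' ⟶ b') :
    (∀ ψ : a ⟶ b, ψ = CategoryTheory.eqToHom ha ≫ ξ ≫ CategoryTheory.eqToHom hb.symm) ↔
      ∀ ψ' : a' ⟶ b', ψ' = ξ := by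
  subst ha; subst hb; simp

end Part2

section Bridge
open CategoryTheory
variable {A A' : Type} [Ring A] [Ring A']

lemma SZ_bridge (F : ModuleCat.{0} A ⥤ ModuleCat.{0} A') [F.Additive]
    (G : CategoryTheory.Quotient (stableRel A) ⥤ CategoryTheory.Quotient (stableRel A'))
    (hG : Quotient.functor (stableRel A) ⋙ G = F ⋙ Quotient.functor (stableRel A'))
    (hGe : G.IsEquivalence) (X Y : ModuleCat.{0} A) :
    SZ X Y ↔ SZ (F.obj X) (F.obj Y) := by
  haveI := hGe
  rw [SZ_iff_quot, SZ_iff_quot]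
  rw [forall_eq_of_fullyFaithful G ((Quotient.functor (stableRel A)).map (0 : X ⟶ Y))]
  have h1 : G.obj ((Quotient.functor (stableRel A)).obj X) =
      (Quotient.functor (stableRel A')).obj (F.obj X) := Functor.congr_obj hG X
  have h2 : G.obj ((Quotient.functor (stableRel A)).obj Y) =
      (Quotient.functor (stableRel A')).obj (F.obj Y) := Functor.congr_obj hG Y
  have hm : G.map ((Quotient.functor (stableRel A)).map (0 : X ⟶ Y)) =
      eqToHom h1 ≫ (Quotient.functor (stableRel A')).map (0 : F.obj X ⟶ F.obj Y) ≫
        eqToHom h2.symm := by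
    have := Functor.congr_hom hG (0 : X ⟶ Y)
    simp only [Functor.comp_map] at this
    rw [this, F.map_zero]
  rw [hm, forall_eq_transport h1 h2]

end Bridge

section Part3
open CategoryTheory Limits
variable {A : Type} [Ring A]

lemma sFac_src_projective {X Y : ModuleCat.{0} A} (hP : Projective X) (f : X ⟶ Y) :
    sFac f := ⟨X, 𝟙 X, f, hP, by simp⟩

lemma sFac_tgt_projective {X Y : ModuleCat.{0} A} (hP : Projective Y) (f : X ⟶ Y) :
    sFac f := ⟨Y, f, 𝟙 Y, hP, by simp⟩

lemma SZ_iso {X X' Y Y' : ModuleCat.{0} A} (e : X ≅ X') (e' : Y ≅ Y') (h : SZ X Y) :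
    SZ X' Y' := by
  intro f
  have := sFac_comp_right (sFac_comp_left (h (e.hom ≫ f ≫ e'.inv)) e.inv) e'.hom
  simpa using this

lemma SZ_biprod (X Y P Q : ModuleCat.{0} A) (hP : Projective P) (hQ : Projective Q) :
    SZ (X ⊞ P) (Y ⊞ Q) ↔ SZ X Y := by
  constructor
  · intro h f
    have h1 := h (biprod.fst ≫ f ≫ biprod.inl)
    have := sFac_comp_right (sFac_comp_left h1 biprod.inl) biprod.fst
    simpa using this
  · intro h ψ
    have h1 : sFac ((biprod.inl : X ⟶ X ⊞ P) ≫ ψ ≫ (biprod.fst : Y ⊞ Q ⟶ Y)) := h _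
    have key : ψ = ((biprod.fst : X ⊞ P ⟶ X) ≫ ((biprod.inl : X ⟶ X ⊞ P) ≫ ψ ≫ (biprod.fst : Y ⊞ Q ⟶ Y)) ≫
          (biprod.inl : Y ⟶ Y ⊞ Q))
        + (((biprod.fst : X ⊞ P ⟶ X) ≫ (biprod.inl : X ⟶ X ⊞ P) ≫ ψ ≫ (biprod.snd : Y ⊞ Q ⟶ Q)) ≫ (biprod.inr : Q ⟶ Y ⊞ Q))
        + ((biprod.snd : X ⊞ P ⟶ P) ≫ ((biprod.inr : P ⟶ X ⊞ P) ≫ ψ)) := by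
      apply biprod.hom_ext' <;> apply biprod.hom_ext <;>
        simp [Preadditive.comp_add, Preadditive.add_comp]
    rw [key]
    refine sFac_add (sFac_add ?_ ?_) ?_
    · exact sFac_comp_right (sFac_comp_left h1 biprod.fst) biprod.inl
    · exact ⟨Q, biprod.fst ≫ (biprod.inl : X ⟶ X ⊞ P) ≫ ψ ≫ biprod.snd, biprod.inr, hQ, rfl⟩
    · exact ⟨P, biprod.snd, (biprod.inr : P ⟶ X ⊞ P) ≫ ψ, hP, rfl⟩

end Part3

section Part4
open CategoryTheory Limits

variable (k : Type) [Field k]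

/-- dimension over `k` of an `R`-module, via restriction of scalars. -/
noncomputable def dimk (R : Type) [Ring R] [Algebra k R]
    (M : Type) [AddCommGroup M] [Module R M] : ℕ :=
  @Module.finrank k M _ _ (Module.compHom M (algebraMap k R))

variable {R : Type} [Ring R] [Algebra k R] [FiniteDimensional k R]

include k in
lemma dimk_strict {M : Type} [AddCommGroup M] [Module R M] [Module.Finite R M]
    {N : Submodule R M} (h : N ≠ ⊤) : dimk k R ↥N < dimk k R M := by
  letI : Module k M := Module.compHom M (algebraMap k R)
  haveI : IsScalarTower k R M := IsScalarTower.of_algebraMap_smul fun c m => rfl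
  haveI : Module.Finite k M := Module.Finite.trans R M
  letI : Module k ↥N := Module.compHom ↥N (algebraMap k R)
  have e : ↥N ≃ₗ[k] ↥(N.restrictScalars k) :=
    { toFun := fun x => ⟨x.1, x.2⟩
      invFun := fun x => ⟨x.1, x.2⟩
      map_add' := fun x y => rfl
      map_smul' := fun c x => rfl
      left_inv := fun x => rfl
      right_inv := fun x => rfl }
  have hlt : N.restrictScalars k < ⊤ := by
    rcases lt_or_eq_of_le (le_top : N.restrictScalars k ≤ ⊤) with h' | h'
    · exact h'
    · exfalso; apply h
      ext x; simp only [Submodule.mem_top, iff_true]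
      have : x ∈ N.restrictScalars k := h' ▸ Submodule.mem_top
      exact this
  calc dimk k R ↥N = Module.finrank k ↥(N.restrictScalars k) := e.finrank_eq
    _ < Module.finrank k M := Submodule.finrank_lt hlt.ne
    _ = dimk k R M := rfl

include k in
lemma dimk_fitting {M : Type} [AddCommGroup M] [Module R M] [Module.Finite R M]
    (e : M →ₗ[R] M) :
    ∃ n : ℕ, 0 < n ∧ IsCompl (LinearMap.ker (e ^ n)) (LinearMap.range (e ^ n)) := by
  letI : Module k M := Module.compHom M (algebraMap k R)
  haveI : IsScalarTower k R M := IsScalarTower.of_algebraMap_smul fun c m => rfl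
  haveI : Module.Finite k M := Module.Finite.trans R M
  haveI : IsNoetherian k M := inferInstance
  haveI : IsArtinian k M := isArtinian_of_fg_of_artinian'
  haveI : IsNoetherian R M := isNoetherian_of_tower k inferInstance
  haveI : IsArtinian R M := isArtinian_of_tower k inferInstance
  obtain ⟨N, hN⟩ := Filter.eventually_atTop.mp e.eventually_isCompl_ker_pow_range_pow
  exact ⟨max N 1, lt_of_lt_of_le Nat.one_pos (le_max_right N 1), hN _ (le_max_left N 1)⟩

/-- a direct summand (retract) of an injective module is injective -/
lemma Module.Injective.of_retract {M N : Type} [AddCommGroup M] [Module R M]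
    [AddCommGroup N] [Module R N] (hM : Module.Injective R M)
    (i : N →ₗ[R] M) (ρ : M →ₗ[R] N) (hρ : ∀ x, ρ (i x) = x) : Module.Injective R N := by
  constructor
  intro X Y _ _ _ _ f hf g
  obtain ⟨h, hh⟩ := hM.out f hf (i.comp g)
  exact ⟨ρ.comp h, fun x => by simp [hh x, hρ]⟩

/-- finite products of self-injective base are injective -/
lemma Module.Injective.pi_self (hR : Module.Injective R R) (ι : Type) [Finite ι] :
    Module.Injective R (ι → R) := by
  constructor
  intro X Y _ _ _ _ f hf g
  have H : ∀ i : ι, ∃ h : Y →ₗ[R] R, ∀ x, h (f x) = (LinearMap.proj i).comp g x := fun i =>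
    hR.out f hf ((LinearMap.proj i).comp g)
  choose h hh using H
  exact ⟨LinearMap.pi h, fun x => by ext i; exact hh i x⟩

end Part4

section Part7
open CategoryTheory Limits

variable {R : Type} [Ring R]

lemma moduleCat_isZero_iff (M : ModuleCat.{0} R) :
    Limits.IsZero M ↔ ∀ x : M, x = 0 := by
  constructor
  · intro h x
    have h0 : (𝟙 M : M ⟶ M) = 0 := h.eq_of_src _ _
    calc x = (𝟙 M : M ⟶ M) x := rfl
      _ = (0 : M ⟶ M) x := by rw [h0]
      _ = 0 := rfl
  · intro h
    haveI : Subsingleton M := ⟨fun a b => by rw [h a, h b]⟩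
    exact ModuleCat.isZero_of_subsingleton M

lemma split_of_retract {X Y : ModuleCat.{0} R} (i : Y ⟶ X) (r : X ⟶ Y)
    (hir : i ≫ r = 𝟙 Y) (hX : Indec X) (hY : ¬ Limits.IsZero Y) : Nonempty (X ≅ Y) := by
  have hir' : ∀ y : Y, r (i y) = y := fun y => by
    have := congr_arg (fun φ : Y ⟶ Y => φ y) hir
    simpa using this
  set K := LinearMap.ker r.hom with hK
  let Kc : ModuleCat.{0} R := ModuleCat.of R ↥K
  let q : (↥X) →ₗ[R] (↥X) := LinearMap.id - i.hom.comp r.hom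
  have hq : ∀ x, r (q x) = 0 := fun x => by
    simp [q, LinearMap.sub_apply, map_sub, hir']
  let p : X ⟶ Kc := ModuleCat.ofHom <| LinearMap.codRestrict K q (fun x => by
    simpa [hK, LinearMap.mem_ker] using hq x)
  let iso : X ≅ Kc ⊞ Y :=
    { hom := biprod.lift p r
      inv := biprod.desc (ModuleCat.ofHom K.subtype) i
      hom_inv_id := by
        rw [biprod.lift_desc]
        apply ModuleCat.hom_ext
        apply LinearMap.ext
        intro x
        show q x + i (r x) = x
        simp [q, LinearMap.sub_apply]
      inv_hom_id := by
        apply biprod.hom_ext' <;> apply biprod.hom_ext <;>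
          simp only [Category.assoc, biprod.lift_fst, biprod.lift_snd,
            biprod.inl_desc_assoc, biprod.inr_desc_assoc, biprod.inl_fst,
            biprod.inl_snd, biprod.inr_fst, biprod.inr_snd, Category.comp_id] <;>
          apply ModuleCat.hom_ext <;> apply LinearMap.ext <;> intro z
        · show p (K.subtype z) = z
          apply Subtype.ext
          show q z.1 = z.1
          have : r z.1 = 0 := z.2
          simp [q, LinearMap.sub_apply, this]
        · show r (K.subtype z) = 0
          exact z.2
        · show p (i z) = 0
          apply Subtype.ext
          show q (i z) = 0
          simp [q, LinearMap.sub_apply, hir']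
        · show r (i z) = z
          exact hir' z }
  rcases hX.2 Kc Y ⟨iso⟩ with hz | hz
  · -- kernel is zero, r is iso
    have hinj : Function.Injective r.hom := by
      rw [← LinearMap.ker_eq_bot]
      rw [Submodule.eq_bot_iff]
      intro x hx
      have : (⟨x, hx⟩ : ↥K) = 0 := (moduleCat_isZero_iff Kc).mp hz _
      exact congrArg Subtype.val this
    have hsurj : Function.Surjective r.hom := fun y => ⟨i y, hir' y⟩
    exact ⟨(LinearEquiv.ofBijective r.hom ⟨hinj, hsurj⟩).toModuleIso⟩
  · exact absurd hz hY

end Part7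

section Part5
open CategoryTheory Limits

lemma modfin_submodule (k : Type) [Field k] {R : Type} [Ring R] [Algebra k R]
    [FiniteDimensional k R] {M : Type} [AddCommGroup M] [Module R M] [Module.Finite R M]
    (V : Submodule R M) : Module.Finite R ↥V := by
  letI : Module k M := Module.compHom M (algebraMap k R)
  haveI : IsScalarTower k R M := IsScalarTower.of_algebraMap_smul fun c m => rfl
  haveI : Module.Finite k M := Module.Finite.trans R M
  haveI : IsNoetherian R M := isNoetherian_of_tower k inferInstance
  exact Module.Finite.iff_fg.mpr (IsNoetherian.noetherian V)

lemma pow_fix {R : Type} [Ring R] {M N : Type} [AddCommGroup M] [Module R M]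
    [AddCommGroup N] [Module R N] (e : M →ₗ[R] M) (π : M →ₗ[R] N)
    (he : ∀ x, π (e x) = π x) (n : ℕ) : ∀ x, π ((e ^ n) x) = π x := by
  induction n with
  | zero => intro x; simp [Module.End.one_apply]
  | succ m ih => intro x; rw [pow_succ, Module.End.mul_apply, ih, he]

lemma range_pow_le {R : Type} [Ring R] {M : Type} [AddCommGroup M] [Module R M]
    (e : M →ₗ[R] M) {n : ℕ} (hn : 0 < n) : LinearMap.range (e ^ n) ≤ LinearMap.range e := by
  obtain ⟨m, rfl⟩ := Nat.exists_eq_add_of_lt hn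
  rintro x ⟨y, rfl⟩
  rw [Nat.zero_add, pow_succ', Module.End.mul_apply]
  exact ⟨_, rfl⟩

lemma ker_pow_le {R : Type} [Ring R] {M : Type} [AddCommGroup M] [Module R M]
    (e : M →ₗ[R] M) {n : ℕ} (hn : 0 < n) : LinearMap.ker e ≤ LinearMap.ker (e ^ n) := by
  obtain ⟨m, rfl⟩ := Nat.exists_eq_add_of_lt hn
  intro x hx
  rw [LinearMap.mem_ker] at hx ⊢
  rw [Nat.zero_add, pow_succ, Module.End.mul_apply, hx, map_zero]

/-- Key lemma, A'-side: an epimorphism from an indecomposable non-projective module onto a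
simple module does not factor through a projective. -/
lemma quotLemma (k : Type) [Field k] {R : Type} [Ring R] [Algebra k R] [FiniteDimensional k R]
    (S X : ModuleCat.{0} R) (hS : Simple S) (hX : Indec X) (hXnp : ¬ Projective X)
    (g : X ⟶ S) (hg : Epi g) (hfac : sFac g) : False := by
  classical
  obtain ⟨P, α, β, hP, hgfac⟩ := hfac
  have hgs : Function.Surjective g := (ModuleCat.epi_iff_surjective g).mp hg
  have hgpt : ∀ x, β (α x) = g x := fun x => by
    have := congr_arg (fun φ : X ⟶ S => φ x) hgfac
    simp only [ConcreteCategory.comp_apply] at this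
    exact this.symm
  haveI hsimp : IsSimpleModule R ↥S := (simple_iff_isSimpleModule' S).mp hS
  haveI : Nontrivial ↥S := IsSimpleModule.nontrivial R ↥S
  obtain ⟨x₀, hx₀⟩ := exists_ne (0 : ↥S)
  set Pred : ℕ → Prop := fun m => ∃ (Q : ModuleCat.{0} R) (π : Q ⟶ S),
    Projective Q ∧ Function.Surjective π ∧ Module.Finite R ↥Q ∧ dimk k R ↥Q = m with hPred
  have hex : ∃ m, Pred m := by
    refine ⟨_, ModuleCat.of R R, ModuleCat.ofHom (LinearMap.toSpanSingleton R ↥S x₀), ?_, ?_,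
      (inferInstance : Module.Finite R R), rfl⟩
    · exact (IsProjective.iff_projective _).mp inferInstance
    · show Function.Surjective (LinearMap.toSpanSingleton R ↥S x₀)
      rw [← LinearMap.range_eq_top, ← LinearMap.span_singleton_eq_range]
      rcases eq_bot_or_eq_top (Submodule.span R {x₀}) with h | h
      · exfalso; apply hx₀
        have := Submodule.mem_span_singleton_self (R := R) x₀
        rw [h] at this
        simpa using this
      · exact h
  obtain ⟨Q₁, π, hQ₁, hπs, hQ₁fin, hdim⟩ := Nat.find_spec hex
  haveI : Projective Q₁ := hQ₁
  haveI : Module.Finite R ↥Q₁ := hQ₁fin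
  haveI : Epi π := (ModuleCat.epi_iff_surjective π).mpr hπs
  -- inner minimality lemma
  have inner : ∀ e : Q₁ ⟶ Q₁, (∀ x, π (e x) = π x) → Function.Surjective e := by
    intro e he
    by_contra hns
    let elin : ↥Q₁ →ₗ[R] ↥Q₁ := e.hom
    obtain ⟨n, hn1, hcompl⟩ := dimk_fitting k elin
    set V := LinearMap.range (elin ^ n) with hV
    have hVne : V ≠ ⊤ := by
      intro h
      apply hns
      have : Function.Surjective elin := by
        apply LinearMap.range_eq_top.mp
        apply top_le_iff.mp
        rw [← h]
        exact range_pow_le _ hn1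
      exact this
    have hπen : ∀ x, π ((elin ^ n) x) = π x := pow_fix elin π.hom he n
    haveI : Module.Finite R ↥V := modfin_submodule k V
    have hprQ : Module.Projective R ↥Q₁ :=
      (IsProjective.iff_projective _).mpr (Projective.of_iso (Iso.refl Q₁) hQ₁)
    have hprV : Module.Projective R ↥V := by
      refine Module.Projective.of_split V.subtype
        (Submodule.linearProjOfIsCompl V _ hcompl.symm) ?_
      exact LinearMap.ext fun v => Submodule.linearProjOfIsCompl_apply_left hcompl.symm v
    have hPredV : Pred (dimk k R ↥V) := by
      refine ⟨ModuleCat.of R ↥V, ModuleCat.ofHom (π.hom.comp V.subtype),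
        (IsProjective.iff_projective _).mp hprV, ?_, modfin_submodule k V, rfl⟩
      intro y
      obtain ⟨x, hx⟩ := hπs y
      refine ⟨⟨(elin ^ n) x, LinearMap.mem_range_self _ x⟩, ?_⟩
      show π ((elin ^ n) x) = y
      rw [hπen x]; exact hx
    have h1 : Nat.find hex ≤ dimk k R ↥V := Nat.find_min' hex hPredV
    have h2 : dimk k R ↥V < dimk k R ↥Q₁ := dimk_strict k hVne
    omega
  -- build the epi α₁ : X ⟶ Q₁
  haveI : Projective P := hP
  have hβs : Function.Surjective β := fun y => by
    obtain ⟨x, hx⟩ := hgs y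
    exact ⟨α x, by rw [hgpt x, hx]⟩
  let w : P ⟶ Q₁ := Projective.factorThru β π
  have hw : w ≫ π = β := Projective.factorThru_comp β π
  have hwpt : ∀ x, π (w x) = β x := fun x => by
    have := congr_arg (fun φ : P ⟶ S => φ x) hw
    simpa using this
  let α₁ : X ⟶ Q₁ := α ≫ w
  have hα₁π : ∀ x, π (α₁ x) = g x := fun x => by
    show π (w (α x)) = g x
    rw [hwpt, hgpt]
  have hα₁s : Function.Surjective α₁ := by
    by_contra hns
    set U := LinearMap.range α₁.hom with hU
    have hUne : U ≠ ⊤ := fun h => hns (LinearMap.range_eq_top.mp h)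
    let πU : ModuleCat.of R ↥U ⟶ S := ModuleCat.ofHom (π.hom.comp U.subtype)
    haveI : Epi πU := by
      rw [ModuleCat.epi_iff_surjective]
      intro y
      obtain ⟨x, hx⟩ := hgs y
      exact ⟨⟨α₁ x, LinearMap.mem_range_self _ x⟩, by
        show π (α₁ x) = y
        rw [hα₁π, hx]⟩
    let t : Q₁ ⟶ ModuleCat.of R ↥U := Projective.factorThru π πU
    have ht : t ≫ πU = π := Projective.factorThru_comp π πU
    let e : Q₁ ⟶ Q₁ := t ≫ ModuleCat.ofHom U.subtype
    have he : ∀ x, π (e x) = π x := fun x => by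
      have := congr_arg (fun φ : Q₁ ⟶ S => φ x) ht
      simpa [e, πU] using this
    have hes := inner e he
    apply hUne
    rw [eq_top_iff]
    rintro y -
    obtain ⟨x, hx⟩ := hes y
    rw [← hx]
    show U.subtype (t x) ∈ U
    exact (t x).2
  haveI : Epi α₁ := (ModuleCat.epi_iff_surjective α₁).mpr hα₁s
  let s : Q₁ ⟶ X := Projective.factorThru (𝟙 Q₁) α₁
  have hs : s ≫ α₁ = 𝟙 Q₁ := Projective.factorThru_comp (𝟙 Q₁) α₁
  have hQ₁nz : ¬ Limits.IsZero Q₁ := by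
    intro hz
    apply hx₀
    obtain ⟨x, hx⟩ := hπs x₀
    have hx0 : x = 0 := (moduleCat_isZero_iff Q₁).mp hz x
    rw [← hx, hx0, map_zero]
  obtain ⟨iso⟩ := split_of_retract s α₁ hs hX hQ₁nz
  exact hXnp (Projective.of_iso iso.symm hQ₁)

end Part5

section Part6
open CategoryTheory Limits

lemma sum_single_subset {ι M : Type} [AddCommMonoid M] (g : ι →₀ M) (T : Finset ι)
    (h : g.support ⊆ T) [DecidableEq ι] : ∑ q ∈ T, Finsupp.single q (g q) = g := by
  ext p
  rw [Finset.sum_apply']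
  simp only [Finsupp.single_apply]
  rw [Finset.sum_ite_eq' T p (fun q => g q)]
  split_ifs with h'
  · rfl
  · exact (Finsupp.notMem_support_iff.mp (fun hc => h' (h hc))).symm

/-- Key lemma, A-side: a monomorphism from a simple module into an indecomposable
non-projective module over a self-injective algebra does not factor through a projective. -/
lemma subLemma (k : Type) [Field k] {R : Type} [Ring R] [Algebra k R] [FiniteDimensional k R]
    (hself : Module.Injective R R)
    (L X : ModuleCat.{0} R) (hL : Simple L) (hX : Indec X) (hXnp : ¬ Projective X)
    (f : L ⟶ X) (hf : Mono f) (hfac : sFac f) : False := by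
  classical
  obtain ⟨P, α, β, hP, hffac⟩ := hfac
  have hfi : Function.Injective f := (ModuleCat.mono_iff_injective f).mp hf
  have hfpt : ∀ l, β (α l) = f l := fun l => by
    have := congr_arg (fun φ : L ⟶ X => φ l) hffac
    simp only [ConcreteCategory.comp_apply] at this
    exact this.symm
  haveI hsimp : IsSimpleModule R ↥L := (simple_iff_isSimpleModule' L).mp hL
  haveI : Nontrivial ↥L := IsSimpleModule.nontrivial R ↥L
  obtain ⟨x₀, hx₀⟩ := exists_ne (0 : ↥L)
  -- reduction: factor `f` through a finite free module with injective first leg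
  have hPmod : Module.Projective R ↥P :=
    (IsProjective.iff_projective _).mpr (Projective.of_iso (Iso.refl P) hP)
  obtain ⟨s, hs⟩ := Module.projective_def.mp hPmod
  set T : Finset ↥P := (s (α x₀)).support with hT
  set I : Type := (↥T → R) with hI
  have hspan : ∀ l : ↥L, ∃ a : R, a • x₀ = l := by
    intro l
    have htop : Submodule.span R {x₀} = ⊤ := by
      rcases eq_bot_or_eq_top (Submodule.span R {x₀}) with h | h
      · exfalso; apply hx₀
        have := Submodule.mem_span_singleton_self (R := R) x₀
        rw [h] at this; simpa using this
      · exact h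
    have : l ∈ Submodule.span R {x₀} := htop ▸ Submodule.mem_top
    exact Submodule.mem_span_singleton.mp this
  have hsupp : ∀ l : ↥L, (s (α l)).support ⊆ T := by
    intro l
    obtain ⟨a, rfl⟩ := hspan l
    have heq : s (α (a • x₀)) = a • s (α x₀) := by rw [map_smul, map_smul]
    rw [heq]; exact Finsupp.support_smul
  let α₁ : ↥L →ₗ[R] I :=
    LinearMap.pi fun t : ↥T => (Finsupp.lapply t.1) ∘ₗ s ∘ₗ α.hom
  let J : I →ₗ[R] (↥P →₀ R) := ∑ t : ↥T, (Finsupp.lsingle t.1) ∘ₗ (LinearMap.proj t)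
  have hJ : ∀ l, J (α₁ l) = s (α l) := by
    intro l
    have h1 : J (α₁ l) = ∑ t : ↥T, Finsupp.single t.1 (s (α l) t.1) := by
      rw [LinearMap.sum_apply]
      rfl
    rw [h1, Finset.sum_coe_sort T (fun q => Finsupp.single q (s (α l) q)),
      sum_single_subset _ _ (hsupp l)]
  let tot : (↥P →₀ R) →ₗ[R] ↥P := Finsupp.linearCombination R id
  let β₁ : I →ₗ[R] ↥X := β.hom ∘ₗ tot ∘ₗ J
  have hβ₁ : ∀ l, β₁ (α₁ l) = f l := by
    intro l
    show β (tot (J (α₁ l))) = f l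
    rw [hJ]
    have : tot (s (α l)) = α l := hs (α l)
    rw [this, hfpt]
  have hα₁i : Function.Injective α₁ := by
    intro a b hab
    apply hfi
    rw [← hβ₁, ← hβ₁, hab]
  have hIinj : Module.Injective R I := Module.Injective.pi_self hself ↥T
  have hIproj : Module.Projective R I := inferInstance
  have hIfin : Module.Finite R I := inferInstance
  -- minimal finite injective-projective receptacle for L
  set Pred : ℕ → Prop := fun m => ∃ (I' : Type) (_ : AddCommGroup I') (_ : Module R I'),
    Module.Finite R I' ∧ Module.Injective R I' ∧ Module.Projective R I' ∧
    (∃ ι : ↥L →ₗ[R] I', Function.Injective ι) ∧ dimk k R I' = m with hPredDef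
  have hex : ∃ m, Pred m := ⟨_, I, inferInstance, inferInstance, hIfin, hIinj, hIproj,
    ⟨α₁, hα₁i⟩, rfl⟩
  obtain ⟨I₁, instAdd, instMod, hI₁fin, hI₁inj, hI₁proj, ⟨ι, hιi⟩, hdim⟩ := Nat.find_spec hex
  have inner : ∀ e : I₁ →ₗ[R] I₁, (∀ l, e (ι l) = ι l) → Function.Injective e := by
    intro e he
    by_contra hni
    have hKne : LinearMap.ker e ≠ ⊥ := fun h => hni (LinearMap.ker_eq_bot.mp h)
    obtain ⟨n, hn1, hcompl⟩ := dimk_fitting k e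
    set V := LinearMap.range (e ^ n) with hV
    have hVne : V ≠ ⊤ := by
      intro h
      have hd : Disjoint (LinearMap.ker (e ^ n)) V := hcompl.disjoint
      rw [h] at hd
      have hker : LinearMap.ker (e ^ n) = ⊥ := disjoint_top.mp hd
      exact hKne (le_bot_iff.mp (hker ▸ ker_pow_le e hn1))
    have hfix : ∀ l, (e ^ n) (ι l) = ι l := by
      have : ∀ (m : ℕ) l, (e ^ m) (ι l) = ι l := by
        intro m
        induction m with
        | zero => intro l; simp
        | succ j ih => intro l; rw [pow_succ, Module.End.mul_apply, he l, ih l]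
      exact this n
    let ι' : ↥L →ₗ[R] ↥V := LinearMap.codRestrict V ι
      (fun l => hfix l ▸ LinearMap.mem_range_self (e ^ n) (ι l))
    have hι'i : Function.Injective ι' := fun a b h => hιi (congrArg Subtype.val h)
    have hVfin : Module.Finite R ↥V := modfin_submodule k V
    have hVproj : Module.Projective R ↥V := by
      refine Module.Projective.of_split V.subtype
        (Submodule.linearProjOfIsCompl V _ hcompl.symm) ?_
      exact LinearMap.ext fun v => Submodule.linearProjOfIsCompl_apply_left hcompl.symm v
    have hVinj : Module.Injective R ↥V :=
      hI₁inj.of_retract V.subtype (Submodule.linearProjOfIsCompl V _ hcompl.symm)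
        (fun v => Submodule.linearProjOfIsCompl_apply_left hcompl.symm v)
    have hPredV : Pred (dimk k R ↥V) :=
      ⟨↥V, inferInstance, inferInstance, hVfin, hVinj, hVproj, ⟨ι', hι'i⟩, rfl⟩
    have h1 : Nat.find hex ≤ dimk k R ↥V := Nat.find_min' hex hPredV
    have h2 : dimk k R ↥V < dimk k R I₁ := dimk_strict k hVne
    omega
  -- factor f through I₁
  obtain ⟨w, hw⟩ := hIinj.out ι hιi α₁
  let γ : I₁ →ₗ[R] ↥X := β₁ ∘ₗ w
  have hγι : ∀ l, γ (ι l) = f l := fun l => by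
    show β₁ (w (ι l)) = f l
    rw [hw, hβ₁]
  have hγi : Function.Injective γ := by
    by_contra hni
    have hKne : LinearMap.ker γ ≠ ⊥ := fun h => hni (LinearMap.ker_eq_bot.mp h)
    set K := LinearMap.ker γ with hKdef
    have hι2 : Function.Injective (K.mkQ ∘ₗ ι) := by
      intro a b hab
      apply hfi
      rw [← hγι, ← hγι]
      have hmem : ι a - ι b ∈ K := by
        rw [LinearMap.comp_apply, LinearMap.comp_apply, Submodule.mkQ_apply,
          Submodule.mkQ_apply] at hab
        exact (Submodule.Quotient.eq K).mp hab
      have : γ (ι a) - γ (ι b) = 0 := by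
        rw [← map_sub]
        exact hmem
      exact sub_eq_zero.mp this
    obtain ⟨u, hu⟩ := hI₁inj.out (K.mkQ ∘ₗ ι) hι2 ι
    let e : I₁ →ₗ[R] I₁ := u ∘ₗ K.mkQ
    have he : ∀ l, e (ι l) = ι l := fun l => hu l
    have hei := inner e he
    obtain ⟨x, hxK, hx0⟩ : ∃ x ∈ K, x ≠ 0 := by
      by_contra h
      push_neg at h
      exact hKne ((Submodule.eq_bot_iff K).mpr h)
    apply hx0
    apply hei
    show u (K.mkQ x) = e 0
    rw [map_zero, Submodule.mkQ_apply, (Submodule.Quotient.mk_eq_zero K).mpr hxK, map_zero]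
  obtain ⟨ρ, hρ⟩ := hI₁inj.out γ hγi LinearMap.id
  let Ic : ModuleCat.{0} R := ModuleCat.of R I₁
  let ih : Ic ⟶ X := ModuleCat.ofHom γ
  let rh : X ⟶ Ic := ModuleCat.ofHom ρ
  have hir : ih ≫ rh = 𝟙 Ic := by
    apply ModuleCat.hom_ext
    apply LinearMap.ext
    intro z
    exact hρ z
  have hInz : ¬ Limits.IsZero Ic := by
    intro hz
    apply hx₀
    apply hιi
    rw [(moduleCat_isZero_iff Ic).mp hz (ι x₀), (moduleCat_isZero_iff Ic).mp hz (ι 0)]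
  obtain ⟨iso⟩ := split_of_retract ih rh hir hX hInz
  exact hXnp (Projective.of_iso iso.symm ((IsProjective.iff_projective _).mp hI₁proj))

end Part6

/-- With `F` a `k`-linear functor preserving projectives and inducing a
stable equivalence between the module categories of finite-dimensional self-injective
`k`-algebras `A`, `A'` without simple projectives, let `L`, `L'` be simple modules,
`ΦL` the non-projective part of `F L` and `ΨL'` the module with `F(ΨL') ≅ L' ⊕ (proj)`
(so that `Φ(ΨL') ≅ L'`).  Then `L` is a submodule of `ΨL'` iff `L'` is a quotient of
`ΦL`. -/
theorem stmt14 (k : Type) [Field k]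
    (A A' : Type) [Ring A] [Ring A'] [Algebra k A] [Algebra k A']
    [FiniteDimensional k A] [FiniteDimensional k A']
    (hselfA : Module.Injective A A) (hselfA' : Module.Injective A' A')
    (hnspA : ∀ S : ModuleCat.{0} A, Simple S → ¬ Projective S)
    (hnspA' : ∀ S : ModuleCat.{0} A', Simple S → ¬ Projective S)
    (F : ModuleCat.{0} A ⥤ ModuleCat.{0} A') [F.Additive] [F.Linear k]
    (hproj : ∀ P : ModuleCat.{0} A, Projective P → Projective (F.obj P))
    (G : Quotient (stableRel A) ⥤ Quotient (stableRel A'))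
    (hG : Quotient.functor (stableRel A) ⋙ G = F ⋙ Quotient.functor (stableRel A'))
    (hGe : G.IsEquivalence)
    (L : ModuleCat.{0} A) (hL : Simple L)
    (L' : ModuleCat.{0} A') (hL' : Simple L')
    -- `ΦL` is the non-projective part of `F L`
    (ΦL : ModuleCat.{0} A') (hΦind : Indec ΦL) (hΦnp : ¬ Projective ΦL)
    (P' : ModuleCat.{0} A') (hP' : Projective P')
    (hΦ : Nonempty (F.obj L ≅ ΦL ⊞ P'))
    -- `ΨL'` is the indecomposable non-projective module with `F(ΨL') ≅ L' ⊕ (proj)`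
    (ΨL' : ModuleCat.{0} A) (hΨind : Indec ΨL') (hΨnp : ¬ Projective ΨL')
    (Q' : ModuleCat.{0} A') (hQ' : Projective Q')
    (hΨ : Nonempty (F.obj ΨL' ≅ L' ⊞ Q')) :
    (∃ f : L ⟶ ΨL', Mono f) ↔ (∃ g : ΦL ⟶ L', Epi g) := by
  classical
  have bridgeLΨ : SZ L ΨL' ↔ SZ ΦL L' := by
    rw [SZ_bridge F G hG hGe L ΨL']
    constructor
    · intro h
      exact (SZ_biprod ΦL L' P' Q' hP' hQ').mp (SZ_iso hΦ.some hΨ.some h)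
    · intro h
      exact SZ_iso hΦ.some.symm hΨ.some.symm ((SZ_biprod ΦL L' P' Q' hP' hQ').mpr h)
  constructor
  · rintro ⟨f, hf⟩
    have hnsz : ¬ SZ L ΨL' := fun h => subLemma k hselfA L ΨL' hL hΨind hΨnp f hf (h f)
    have hnsz' : ¬ SZ ΦL L' := fun h => hnsz (bridgeLΨ.mpr h)
    obtain ⟨g, hg⟩ : ∃ g : ΦL ⟶ L', ¬ sFac g := not_forall.mp hnsz'
    refine ⟨g, ?_⟩
    have hg0 : g ≠ 0 := fun h => hg (h ▸ sFac_zero)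
    haveI hsimp : IsSimpleModule A' ↥L' := (simple_iff_isSimpleModule' L').mp hL'
    rw [ModuleCat.epi_iff_surjective]
    rcases eq_bot_or_eq_top (LinearMap.range g.hom) with h | h
    · exfalso
      apply hg0
      apply ModuleCat.hom_ext
      apply LinearMap.ext
      intro x
      have hx : g x ∈ LinearMap.range g.hom := LinearMap.mem_range_self _ x
      rw [h] at hx
      simpa using hx
    · exact LinearMap.range_eq_top.mp h
  · rintro ⟨g, hg⟩
    have hnsz' : ¬ SZ ΦL L' := fun h => quotLemma k L' ΦL hL' hΦind hΦnp g hg (h g)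
    have hnsz : ¬ SZ L ΨL' := fun h => hnsz' (bridgeLΨ.mp h)
    obtain ⟨f, hfn⟩ : ∃ f : L ⟶ ΨL', ¬ sFac f := not_forall.mp hnsz
    refine ⟨f, ?_⟩
    have hf0 : f ≠ 0 := fun h => hfn (h ▸ sFac_zero)
    haveI hsimp : IsSimpleModule A ↥L := (simple_iff_isSimpleModule' L).mp hL
    rw [ModuleCat.mono_iff_injective]
    rcases eq_bot_or_eq_top (LinearMap.ker f.hom) with h | h
    · exact LinearMap.ker_eq_bot.mp h
    · exfalso
      apply hf0
      apply ModuleCat.hom_ext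
      apply LinearMap.ext
      intro x
      have hx : x ∈ LinearMap.ker f.hom := h ▸ Submodule.mem_top
      simpa using hx
end

section
/- Let A and A' be finite-dimensional self-injective k-algebras with no simple projective modules, F : A-mod → A'-mod a k-linear functor preserving projectives inducing a stable equivalence, {L_i}_{i∈I} and {L'_j}_{j∈J} complete sets of simple modules, and for each i let J_i = { j ∈ J : L'_j is a quotient of Φ(L_i) }, where Φ(L_i) is the non-projective part of F(L_i). Then J = ∪_{i∈I} J_i. -/
open CategoryTheory
open CategoryTheory.Limits

namespace Stmt15Aux

section ModTheory

variable {R : Type} [Ring R]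

/-- Injectivity is closed under retracts. -/
theorem inj_retract {M N : Type} [AddCommGroup M] [Module R M] [AddCommGroup N] [Module R N]
    (i : M →ₗ[R] N) (s : N →ₗ[R] M) (hsi : ∀ x, s (i x) = x)
    (hN : Module.Injective R N) : Module.Injective R M where
  out X Y _ _ _ _ f hf g := by
    obtain ⟨h, hh⟩ := hN.out f hf (i ∘ₗ g)
    refine ⟨s ∘ₗ h, fun x => ?_⟩
    simp only [LinearMap.comp_apply] at hh ⊢
    rw [hh, hsi]

theorem inj_equiv {M N : Type} [AddCommGroup M] [Module R M] [AddCommGroup N] [Module R N]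
    (e : M ≃ₗ[R] N) (hM : Module.Injective R M) : Module.Injective R N :=
  inj_retract e.symm.toLinearMap e.toLinearMap (fun x => e.apply_symm_apply x) hM

theorem inj_subsingleton {M : Type} [AddCommGroup M] [Module R M] [Subsingleton M] :
    Module.Injective R M where
  out X Y _ _ _ _ f _ g := ⟨0, fun _ => Subsingleton.elim _ _⟩

theorem inj_pi {τ : Type} {Q : τ → Type} [∀ t, AddCommGroup (Q t)] [∀ t, Module R (Q t)]
    (hQ : ∀ t, Module.Injective R (Q t)) : Module.Injective R (∀ t, Q t) where
  out X Y _ _ _ _ f hf g := by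
    have H : ∀ t : τ, ∃ h : Y →ₗ[R] Q t, ∀ x, h (f x) = (g x) t := fun t => by
      obtain ⟨h, hh⟩ := (hQ t).out f hf ((LinearMap.proj t) ∘ₗ g)
      exact ⟨h, fun x => hh x⟩
    choose h hh using H
    exact ⟨LinearMap.pi h, fun x => funext fun t => hh t x⟩

theorem inj_prod {M N : Type} [AddCommGroup M] [Module R M] [AddCommGroup N] [Module R N]
    (hM : Module.Injective R M) (hN : Module.Injective R N) : Module.Injective R (M × N) where
  out X Y _ _ _ _ f hf g := by
    obtain ⟨h₁, hh₁⟩ := hM.out f hf ((LinearMap.fst R M N) ∘ₗ g)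
    obtain ⟨h₂, hh₂⟩ := hN.out f hf ((LinearMap.snd R M N) ∘ₗ g)
    refine ⟨h₁.prod h₂, fun x => ?_⟩
    have e1 := hh₁ x; have e2 := hh₂ x
    simp only [LinearMap.comp_apply] at e1 e2
    simp [LinearMap.prod_apply, e1, e2]

/-- Free modules over a "noetherian" self-injective ring are injective. -/
theorem inj_finsupp (hfg : ∀ I : Ideal R, I.FG) (hR : Module.Injective R R) (σ : Type) :
    Module.Injective R (σ →₀ R) := by
  classical
  apply Module.Baer.injective
  intro I g
  obtain ⟨s, hs⟩ := hfg I
  have hsI : ∀ x ∈ s, x ∈ I := fun x hx => by rw [← hs]; exact Submodule.subset_span hx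
  set t : Finset σ := s.attach.biUnion (fun x => (g ⟨x.1, hsI x.1 x.2⟩).support) with ht
  have hsub : ∀ y : I, (g y : σ →₀ R) ∈ Finsupp.supported R R (↑t : Set σ) := by
    intro y
    have hIW : I ≤ Submodule.map I.subtype
        (Submodule.comap g (Finsupp.supported R R (↑t : Set σ))) := by
      conv_lhs => rw [← hs]
      apply Submodule.span_le.mpr
      intro x hx
      refine ⟨⟨x, hsI x hx⟩, Submodule.mem_comap.mpr ((Finsupp.mem_supported R _).mpr ?_), rfl⟩
      intro a ha
      refine Finset.mem_coe.mpr (Finset.mem_biUnion.mpr ⟨⟨x, hx⟩, s.mem_attach _, ?_⟩)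
      exact ha
    obtain ⟨u, hu, hval⟩ := hIW y.2
    have : u = y := Subtype.ext hval
    rw [← this]
    exact hu
  have hVinj : Module.Injective R (Finsupp.supported R R (↑t : Set σ)) := by
    have e1 := Finsupp.supportedEquivFinsupp (M := R) (R := R) (↑t : Set σ)
    have e2 := Finsupp.linearEquivFunOnFinite R R (↑t : Set σ)
    exact inj_equiv (e1.trans e2).symm (inj_pi (fun _ => hR))
  obtain ⟨h, hh⟩ := hVinj.out I.subtype Subtype.val_injective
    (LinearMap.codRestrict _ g hsub)
  refine ⟨(Finsupp.supported R R (↑t : Set σ)).subtype ∘ₗ h, fun x hx => ?_⟩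
  have := hh ⟨x, hx⟩
  calc ((Finsupp.supported R R (↑t : Set σ)).subtype ∘ₗ h) x
      = ((h (I.subtype ⟨x, hx⟩) : σ →₀ R)) := rfl
    _ = g ⟨x, hx⟩ := by rw [this]; rfl

/-- Projective modules over findim self-injective algebras are injective. -/
theorem proj_imp_inj (hfg : ∀ I : Ideal R, I.FG) (hR : Module.Injective R R)
    {P : Type} [AddCommGroup P] [Module R P] (hP : Module.Projective R P) :
    Module.Injective R P := by
  obtain ⟨sP, hsP⟩ := Module.projective_def.mp hP
  exact inj_retract sP (Finsupp.linearCombination R id) hsP (inj_finsupp hfg hR P)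

theorem inj_sup {X : Type} [AddCommGroup X] [Module R X] {p q : Submodule R X}
    (hdis : Disjoint p q) (hp : Module.Injective R p) (hq : Module.Injective R q) :
    Module.Injective R ↥(p ⊔ q) := by
  set φ : (↥p × ↥q) →ₗ[R] X := p.subtype.coprod q.subtype with hφ
  have hinj : Function.Injective φ := by
    rw [← LinearMap.ker_eq_bot]
    rw [Submodule.eq_bot_iff]
    rintro ⟨a, b⟩ hab
    have hab0 : (a : X) + (b : X) = 0 := hab
    have ha : (a : X) ∈ p ⊓ q := by
      refine ⟨a.2, ?_⟩
      have h2 : (a : X) = -(b : X) := eq_neg_of_add_eq_zero_left hab0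
      rw [h2]; exact neg_mem b.2
    have := hdis.eq_bot ▸ ha
    have ha0 : (a : X) = 0 := by simpa using this
    have hb0 : (b : X) = 0 := by rwa [ha0, zero_add] at hab0
    exact Prod.ext (Subtype.ext ha0) (Subtype.ext hb0)
  have hrange : LinearMap.range φ = p ⊔ q := by
    rw [hφ, LinearMap.range_coprod, Submodule.range_subtype, Submodule.range_subtype]
  exact inj_equiv ((LinearEquiv.ofInjective φ hinj).trans (LinearEquiv.ofEq _ _ hrange))
    (inj_prod hp hq)

theorem inj_finset_iSup {X : Type} [AddCommGroup X] [Module R X] {ι : Type}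
    (p : ι → Submodule R X) (hind : iSupIndep p) (hinj : ∀ i, Module.Injective R (p i))
    (s : Finset ι) : Module.Injective R ↥(⨆ i ∈ s, p i) := by
  classical
  induction s using Finset.induction_on with
  | empty =>
      rw [show (⨆ i ∈ (∅ : Finset ι), p i) = ⊥ by simp]
      exact inj_subsingleton
  | @insert a s ha ih =>
      rw [show (⨆ i ∈ insert a s, p i) = p a ⊔ ⨆ i ∈ s, p i by
        simp [iSup_or, iSup_sup_eq, Finset.mem_insert]]
      refine inj_sup ?_ (hinj a) ih
      refine (hind a).mono_right ?_
      refine iSup₂_le fun i hi => ?_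
      have hne : i ≠ a := fun h => ha (h ▸ hi)
      exact le_iSup₂ (f := fun j (_ : j ≠ a) => p j) i hne

/-- A direct sum of injective submodules over a ring with f.g. ideals is injective. -/
theorem inj_iSup {X : Type} [AddCommGroup X] [Module R X] (hfg : ∀ I : Ideal R, I.FG)
    {ι : Type} (p : ι → Submodule R X) (hind : iSupIndep p)
    (hinj : ∀ i, Module.Injective R (p i)) : Module.Injective R ↥(⨆ i, p i) := by
  classical
  apply Module.Baer.injective
  intro I g
  obtain ⟨s, hs⟩ := hfg I
  have hsI : ∀ x ∈ s, x ∈ I := fun x hx => by rw [← hs]; exact Submodule.subset_span hx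
  -- each generator image lies in a finite part
  have hgen : ∀ y : I, ∃ t : Finset ι, ((g y : ↥(⨆ i, p i)) : X) ∈ ⨆ i ∈ t, p i := fun y =>
    Submodule.mem_iSup_iff_exists_finset.mp (g y).2
  choose tfun htfun using hgen
  set T : Finset ι := s.attach.biUnion (fun x => tfun ⟨x.1, hsI x.1 x.2⟩) with hT
  have hmono : ∀ y : I, (⨆ i ∈ tfun y, p i) ≤ ⨆ i ∈ T, p i → ((g y : _) : X) ∈ ⨆ i ∈ T, p i :=
    fun y h => h (htfun y)
  set g₀ : I →ₗ[R] X := (⨆ i, p i).subtype ∘ₗ g with hg₀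
  have hsub : ∀ y : I, g₀ y ∈ ⨆ i ∈ T, p i := by
    intro y
    have hIW : I ≤ Submodule.map I.subtype (Submodule.comap g₀ (⨆ i ∈ T, p i)) := by
      conv_lhs => rw [← hs]
      apply Submodule.span_le.mpr
      intro x hx
      refine ⟨⟨x, hsI x hx⟩, Submodule.mem_comap.mpr ?_, rfl⟩
      refine hmono ⟨x, hsI x hx⟩ ?_
      refine iSup₂_le fun i hi => ?_
      refine le_iSup₂ (f := fun j (_ : j ∈ T) => p j) i ?_
      exact Finset.mem_biUnion.mpr ⟨⟨x, hx⟩, s.mem_attach _, hi⟩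
    obtain ⟨u, hu, hval⟩ := hIW y.2
    have : u = y := Subtype.ext hval
    rw [← this]; exact hu
  have hTinj : Module.Injective R ↥(⨆ i ∈ T, p i) := inj_finset_iSup p hind hinj T
  obtain ⟨h, hh⟩ := hTinj.out I.subtype Subtype.val_injective
    (LinearMap.codRestrict _ g₀ hsub)
  have hle2 : (⨆ i ∈ T, p i) ≤ ⨆ i, p i := iSup₂_le fun i _ => le_iSup p i
  refine ⟨(Submodule.inclusion hle2) ∘ₗ h, fun x hx => ?_⟩
  have hx2 := hh ⟨x, hx⟩
  apply Subtype.ext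
  show ((Submodule.inclusion hle2 (h x) : ↥(⨆ i, p i)) : X) = ((g ⟨x, hx⟩ : _) : X)
  have h3 : ((Submodule.inclusion hle2 (h x) : _) : X) = ((h x : _) : X) := rfl
  have h4 : h x = h (I.subtype ⟨x, hx⟩) := rfl
  rw [h3, h4, hx2]
  rfl

/-- An injective submodule is a direct summand. -/
theorem compl_of_inj {X : Type} [AddCommGroup X] [Module R X] (E : Submodule R X)
    (hE : Module.Injective R ↥E) : ∃ Y, IsCompl Y E := by
  obtain ⟨r, hr⟩ := hE.out E.subtype Subtype.val_injective LinearMap.id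
  refine ⟨LinearMap.ker r, ⟨?_, ?_⟩⟩
  · rw [Submodule.disjoint_def]
    intro x hxker hxE
    have h1 : r x = (⟨x, hxE⟩ : ↥E) := by
      have := hr ⟨x, hxE⟩
      simpa using this
    have h0 : r x = 0 := hxker
    have h2 : (⟨x, hxE⟩ : ↥E) = 0 := by rw [← h1, h0]
    have := congrArg (Subtype.val) h2
    simpa using this
  · rw [codisjoint_iff, Submodule.eq_top_iff']
    intro x
    refine Submodule.mem_sup.mpr ⟨x - (r x : X), ?_, (r x : X), (r x).2, sub_add_cancel x _⟩
    have : r (x - (r x : X)) = r x - r ((r x : X)) := by rw [map_sub]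
    have h2 : r ((r x : X)) = r x := by
      have := hr (r x); simpa using this
    have : r (x - (r x : X)) = 0 := by rw [this, h2, sub_self]
    exact this

/-- The key decomposition: strip off a maximal projective-injective direct summand. -/
theorem lemmaZ (hfg : ∀ I : Ideal R, I.FG) (hRR : Module.Injective R R)
    (X : Type) [AddCommGroup X] [Module R X] :
    ∃ E Y : Submodule R X, IsCompl Y E ∧ Module.Projective R ↥E ∧
      ∀ Q : Submodule R X, Q ≤ Y → Module.Projective R ↥Q → Q = ⊥ := by
  classical
  set S : Set (Set (Submodule R X)) :=
    {F | (∀ Q ∈ F, Module.Injective R ↥Q ∧ Module.Projective R ↥Q) ∧ sSupIndep F} with hS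
  have hchainS : ∀ c ⊆ S, IsChain (· ⊆ ·) c → ∃ ub ∈ S, ∀ s ∈ c, s ⊆ ub := by
    intro c hcS hchain
    refine ⟨⋃₀ c, ⟨?_, ?_⟩, fun s hs => Set.subset_sUnion_of_mem hs⟩
    · rintro Q ⟨D, hDc, hQD⟩
      exact (hcS hDc).1 Q hQD
    · intro a ha
      obtain ⟨D₀, hD₀c, haD₀⟩ := ha
      rw [Submodule.disjoint_def]
      intro x hxa hxs
      haveI : Nonempty c := ⟨⟨D₀, hD₀c⟩⟩
      have hle : sSup (⋃₀ c \ {a}) ≤ ⨆ D : c, sSup ((D : Set (Submodule R X)) \ {a}) := by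
        apply sSup_le
        rintro Q ⟨⟨D, hDc, hQD⟩, hQa⟩
        exact le_trans (le_sSup (show Q ∈ (D : Set (Submodule R X)) \ {a} from ⟨hQD, hQa⟩))
          (le_iSup (fun D : c => sSup ((D : Set (Submodule R X)) \ {a})) (⟨D, hDc⟩ : c))
      have hdir : Directed (· ≤ ·) (fun D : c => sSup ((D : Set (Submodule R X)) \ {a})) := by
        rintro ⟨D₁, hD₁⟩ ⟨D₂, hD₂⟩
        rcases hchain.total hD₁ hD₂ with h | h
        · exact ⟨⟨D₂, hD₂⟩, sSup_le_sSup (Set.diff_subset_diff_left h), le_refl _⟩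
        · exact ⟨⟨D₁, hD₁⟩, le_refl _, sSup_le_sSup (Set.diff_subset_diff_left h)⟩
      obtain ⟨⟨D, hDc⟩, hxD⟩ := (Submodule.mem_iSup_of_directed _ hdir).mp (hle hxs)
      rcases hchain.total hDc hD₀c with h | h
      · have hxD0 : x ∈ sSup ((D₀ : Set (Submodule R X)) \ {a}) :=
          sSup_le_sSup (Set.diff_subset_diff_left h) hxD
        exact Submodule.disjoint_def.mp ((hcS hD₀c).2 haD₀) x hxa hxD0
      · have haD : a ∈ D := h haD₀
        exact Submodule.disjoint_def.mp ((hcS hDc).2 haD) x hxa hxD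
  obtain ⟨Fam, hFamMax⟩ := zorn_subset S hchainS
  -- unpack the maximal family
  have hFam : Fam ∈ S := hFamMax.1
  set E : Submodule R X := sSup Fam with hE
  have hiid : iSupIndep (fun Q : Fam => (Q : Submodule R X)) := (sSupIndep_iff Fam).mp hFam.2
  have hEeq : E = ⨆ Q : Fam, (Q : Submodule R X) := sSup_eq_iSup' Fam
  have hEinj : Module.Injective R ↥E := by
    rw [hEeq]
    exact inj_iSup hfg _ hiid (fun Q => (hFam.1 Q Q.2).1)
  obtain ⟨Y, hcompl⟩ := compl_of_inj E hEinj
  have hEproj : Module.Projective R ↥E := by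
    haveI : ∀ Q : Fam, Module.Projective R ↥(Q : Submodule R X) := fun Q => (hFam.1 Q Q.2).2
    set φ := DFinsupp.lsum ℕ (fun Q : Fam => (Q : Submodule R X).subtype) with hφ
    have hinj : Function.Injective φ := hiid.dfinsupp_lsum_injective
    have hrange : LinearMap.range φ = E := by
      rw [hEeq, Submodule.iSup_eq_range_dfinsupp_lsum]
    exact Module.Projective.of_equiv
      ((LinearEquiv.ofInjective φ hinj).trans (LinearEquiv.ofEq _ _ hrange))
  refine ⟨E, Y, hcompl, hEproj, ?_⟩
  intro Q hQY hQproj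
  by_contra hQne
  have hQinj : Module.Injective R ↥Q := proj_imp_inj hfg hRR hQproj
  have hdisQE : Disjoint Q E := by
    refine Disjoint.mono_left hQY ?_
    exact hcompl.disjoint
  have hQnotmem : Q ∉ Fam := by
    intro hmem
    have h1 : Q ≤ E := le_sSup hmem
    refine hQne (le_bot_iff.mp ?_)
    rw [← disjoint_iff.mp hdisQE]
    exact le_inf (le_refl Q) h1
  have hnew : insert Q Fam ∈ S := by
    constructor
    · rintro Q' (rfl | hQ')
      · exact ⟨hQinj, hQproj⟩
      · exact hFam.1 Q' hQ'
    · intro a ha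
      rcases ha with rfl | haF
      · rw [Set.insert_diff_self_of_notMem hQnotmem]
        exact hdisQE
      · have hQa : Q ≠ a := fun h => hQnotmem (h ▸ haF)
        have hset : insert Q Fam \ {a} = insert Q (Fam \ {a}) := by
          rw [Set.insert_diff_of_notMem]
          simp [hQa]
        rw [hset, sSup_insert]
        rw [Submodule.disjoint_def]
        intro x hxa hx
        obtain ⟨q, hq, s', hs', hqs⟩ := Submodule.mem_sup.mp hx
        have hxE : x ∈ E := le_sSup haF hxa
        have hs'E : s' ∈ E :=
          (sSup_le_sSup (Set.diff_subset) : sSup (Fam \ {a}) ≤ sSup Fam) hs'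
        have hqE : q ∈ E := by
          have : q = x - s' := by rw [← hqs, add_sub_cancel_right]
          rw [this]; exact sub_mem hxE hs'E
        have hq0 : q = 0 := Submodule.disjoint_def.mp hdisQE q hq hqE
        have hxs' : x = s' := by rw [← hqs, hq0, zero_add]
        rw [hxs'] at hxa ⊢
        exact Submodule.disjoint_def.mp (hFam.2 haF) s' hxa hs'
  have hsub := hFamMax.2 hnew (Set.subset_insert _ _)
  exact hQnotmem (hsub (Set.mem_insert _ _))

/-- Every nonzero module over a finite-dimensional algebra has a simple submodule. -/
theorem exists_simple_submodule (k : Type) [Field k] [Algebra k R] [FiniteDimensional k R]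
    {X : Type} [AddCommGroup X] [Module R X] (x : X) (hx : x ≠ 0) :
    ∃ S : Submodule R X, IsSimpleModule R ↥S := by
  haveI : IsArtinian k R := isArtinian_of_fg_of_artinian'
  haveI : IsArtinian R R := isArtinian_of_tower k inferInstance
  set ψ := LinearMap.toSpanSingleton R X x with hψ
  haveI : IsArtinian R ↥(LinearMap.range ψ) := isArtinian_range ψ
  have hxmem : x ∈ LinearMap.range ψ := ⟨1, by simp [hψ]⟩
  have hnontriv : (⟨x, hxmem⟩ : ↥(LinearMap.range ψ)) ≠ 0 := by
    intro h
    exact hx (by simpa using congrArg Subtype.val h)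
  -- find minimal nonzero submodule
  have hwf : WellFounded ((· < ·) : Submodule R ↥(LinearMap.range ψ) →
      Submodule R ↥(LinearMap.range ψ) → Prop) := IsWellFounded.wf
  obtain ⟨S', hS'mem, hS'min⟩ := hwf.has_min
    {T : Submodule R ↥(LinearMap.range ψ) | T ≠ ⊥}
    ⟨⊤, by
      intro h
      have : (⟨x, hxmem⟩ : ↥(LinearMap.range ψ)) ∈ (⊤ : Submodule R ↥(LinearMap.range ψ)) :=
        trivial
      rw [h] at this
      exact hnontriv (by simpa using this)⟩
  have hatom : IsAtom S' := by
    constructor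
    · exact hS'mem
    · intro b hb
      by_contra hbne
      exact hS'min b hbne hb
  haveI hsimple' : IsSimpleModule R ↥S' := isSimpleModule_iff_isAtom.mpr hatom
  refine ⟨S'.map (LinearMap.range ψ).subtype, ?_⟩
  exact IsSimpleModule.congr
    (Submodule.equivMapOfInjective (LinearMap.range ψ).subtype Subtype.val_injective S').symm

/-- Essential hull of a submodule inside an injective module splits off. -/
theorem hull_split {P : Type} [AddCommGroup P] [Module R P] (hPinj : Module.Injective R P)
    (T : Submodule R P) :
    ∃ H : Submodule R P, T ≤ H ∧ (∀ U : Submodule R P, U ≤ H → U ⊓ T = ⊥ → U = ⊥) ∧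
      ∃ ρ : P →ₗ[R] ↥H, ∀ h : ↥H, ρ (h : P) = h := by
  classical
  set Ess : Set (Submodule R P) :=
    {W | T ≤ W ∧ ∀ U : Submodule R P, U ≤ W → U ⊓ T = ⊥ → U = ⊥} with hEss
  -- Zorn for maximal essential extension
  have hEssChain : ∀ c ⊆ Ess, IsChain (· ≤ ·) c → ∀ y ∈ c, ∃ ub ∈ Ess, ∀ z ∈ c, z ≤ ub := by
    intro c hcE hchain y hyc
    haveI : Nonempty c := ⟨⟨y, hyc⟩⟩
    refine ⟨sSup c, ⟨?_, ?_⟩, fun z hz => le_sSup hz⟩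
    · exact le_trans (hcE hyc).1 (le_sSup hyc)
    · intro U hU hUT
      rw [Submodule.eq_bot_iff]
      intro u hu
      have : u ∈ sSup c := hU hu
      rw [sSup_eq_iSup'] at this
      have hdir : Directed (· ≤ ·) (fun W : c => (W : Submodule R P)) := by
        rintro ⟨W₁, h₁⟩ ⟨W₂, h₂⟩
        rcases hchain.total h₁ h₂ with h | h
        · exact ⟨⟨W₂, h₂⟩, h, le_refl _⟩
        · exact ⟨⟨W₁, h₁⟩, le_refl _, h⟩
      obtain ⟨⟨W, hWc⟩, huW⟩ := (Submodule.mem_iSup_of_directed _ hdir).mp this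
      have hspan : Submodule.span R {u} ≤ W := (Submodule.span_singleton_le_iff_mem u W).mpr huW
      have hz : Submodule.span R {u} = ⊥ := by
        refine (hcE hWc).2 _ hspan ?_
        refine le_bot_iff.mp ?_
        rw [← hUT]
        refine le_inf ?_ inf_le_right
        exact le_trans inf_le_left
          ((Submodule.span_singleton_le_iff_mem u U).mpr hu)
      have : u ∈ Submodule.span R {u} := Submodule.mem_span_singleton_self u
      rw [hz] at this
      simpa using this
  have hTEss : T ∈ Ess := by
    refine ⟨le_refl T, fun U hUT hbot => ?_⟩
    rwa [inf_eq_left.mpr hUT] at hbot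
  obtain ⟨H, hTH, hHmax⟩ := zorn_le_nonempty₀ Ess hEssChain T hTEss
  have hHEss : H ∈ Ess := hHmax.1
  -- Zorn for maximal complement of H
  set Compl : Set (Submodule R P) := {C | C ⊓ H = ⊥} with hCompl
  have hComplChain : ∀ c ⊆ Compl, IsChain (· ≤ ·) c → ∀ y ∈ c, ∃ ub ∈ Compl, ∀ z ∈ c, z ≤ ub := by
    intro c hcC hchain y hyc
    haveI : Nonempty c := ⟨⟨y, hyc⟩⟩
    refine ⟨sSup c, ?_, fun z hz => le_sSup hz⟩
    show sSup c ⊓ H = ⊥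
    rw [Submodule.eq_bot_iff]
    rintro u ⟨hu1, hu2⟩
    rw [sSup_eq_iSup'] at hu1
    have hdir : Directed (· ≤ ·) (fun W : c => (W : Submodule R P)) := by
      rintro ⟨W₁, h₁⟩ ⟨W₂, h₂⟩
      rcases hchain.total h₁ h₂ with h | h
      · exact ⟨⟨W₂, h₂⟩, h, le_refl _⟩
      · exact ⟨⟨W₁, h₁⟩, le_refl _, h⟩
    obtain ⟨⟨W, hWc⟩, huW⟩ := (Submodule.mem_iSup_of_directed _ hdir).mp hu1
    have : u ∈ W ⊓ H := ⟨huW, hu2⟩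
    rw [hcC hWc] at this
    simpa using this
  obtain ⟨C, _, hCmax⟩ := zorn_le_nonempty₀ Compl hComplChain ⊥ (by show (⊥ : Submodule R P) ⊓ H = ⊥; simp)
  have hCC : C ⊓ H = ⊥ := hCmax.1
  -- the quotient map restricted to H
  set φ : ↥H →ₗ[R] P ⧸ C := C.mkQ ∘ₗ H.subtype with hφ
  have hφinj : Function.Injective φ := by
    rw [← LinearMap.ker_eq_bot, Submodule.eq_bot_iff]
    intro h hh
    have h1 : ((h : P) : P) ∈ C := by
      have : C.mkQ (h : P) = 0 := hh
      rwa [Submodule.mkQ_apply, Submodule.Quotient.mk_eq_zero] at this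
    have : (h : P) ∈ C ⊓ H := ⟨h1, h.2⟩
    rw [hCC] at this
    exact Subtype.ext (by simpa using this)
  set qH := LinearMap.range φ with hqH
  -- qH is essential in P/C
  have hessq : ∀ V : Submodule R (P ⧸ C), V ⊓ qH = ⊥ → V = ⊥ := by
    intro V hV
    rw [Submodule.eq_bot_iff]
    intro v hv
    by_contra hvne
    obtain ⟨u, hu⟩ := C.mkQ_surjective v
    have huC : u ∉ C := by
      intro h
      exact hvne (by rw [← hu, Submodule.mkQ_apply, Submodule.Quotient.mk_eq_zero]; exact h)
    have hC' : ¬ ((C ⊔ Submodule.span R {u}) ⊓ H = ⊥) := by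
      intro h0
      have hle := hCmax.2 h0 le_sup_left
      exact huC (hle (le_sup_right (α := Submodule R P)
        (Submodule.mem_span_singleton_self u)))
    obtain ⟨h, hhmem, hhne⟩ := (Submodule.ne_bot_iff _).mp hC'
    obtain ⟨hh1, hh2⟩ := hhmem
    obtain ⟨cc, hcc, z, hz, hczh⟩ := Submodule.mem_sup.mp hh1
    obtain ⟨r, hr⟩ := Submodule.mem_span_singleton.mp hz
    have hmkq : C.mkQ h = r • v := by
      rw [← hczh, map_add]
      have h1 : C.mkQ cc = 0 := by rwa [Submodule.mkQ_apply, Submodule.Quotient.mk_eq_zero]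
      rw [h1, zero_add, ← hr, map_smul, hu]
    have hmkqne : C.mkQ h ≠ 0 := by
      intro h0
      have : h ∈ C ⊓ H := ⟨by rwa [Submodule.mkQ_apply, Submodule.Quotient.mk_eq_zero] at h0, hh2⟩
      rw [hCC] at this
      exact hhne (by simpa using this)
    have : C.mkQ h ∈ V ⊓ qH := by
      constructor
      · rw [hmkq]; exact Submodule.smul_mem V r hv
      · exact ⟨⟨h, hh2⟩, rfl⟩
    rw [hV] at this
    exact hmkqne (by simpa using this)
  set eH := LinearEquiv.ofInjective φ hφinj with heH
  -- extend the inverse to all of P/C using injectivity of P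
  obtain ⟨θ, hθ⟩ := hPinj.out qH.subtype Subtype.val_injective (H.subtype ∘ₗ eH.symm.toLinearMap)
  have hθφ : ∀ h : ↥H, θ (φ h) = (h : P) := by
    intro h
    have h2 := hθ (eH h)
    have h3 : qH.subtype (eH h) = φ h := rfl
    rw [h3] at h2
    rw [h2]
    show (H.subtype (eH.symm (eH h))) = (h : P)
    rw [LinearEquiv.symm_apply_apply]
    rfl
  have hkerθ : LinearMap.ker θ = ⊥ := by
    apply hessq
    rw [Submodule.eq_bot_iff]
    rintro z ⟨hz1, hz2⟩
    obtain ⟨h, hh⟩ := hz2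
    have : θ z = (h : P) := by rw [← hh]; exact hθφ h
    have hzero : (h : P) = 0 := by rw [← this]; exact hz1
    have : h = 0 := Subtype.ext hzero
    rw [← hh, this, map_zero]
  have hHle : H ≤ LinearMap.range θ := by
    intro h hh
    exact ⟨φ ⟨h, hh⟩, hθφ ⟨h, hh⟩⟩
  have hrangeθ : LinearMap.range θ = H := by
    refine le_antisymm ?_ hHle
    have hMEss : LinearMap.range θ ∈ Ess := by
      refine ⟨le_trans hTH hHle, ?_⟩
      intro U hU hUT
      rw [Submodule.eq_bot_iff]
      intro u hu
      obtain ⟨z, hz⟩ := hU hu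
      have hV' : Submodule.comap θ U ⊓ qH = ⊥ := by
        rw [Submodule.eq_bot_iff]
        rintro ww ⟨hw1, hw2⟩
        obtain ⟨hhh, hhh2⟩ := hw2
        have hθw : θ ww = (hhh : P) := by rw [← hhh2]; exact hθφ hhh
        have hU2 : θ ww ∈ U ⊓ H := ⟨hw1, by rw [hθw]; exact hhh.2⟩
        have : U ⊓ H = ⊥ := by
          refine hHEss.2 (U ⊓ H) inf_le_right ?_
          refine le_bot_iff.mp ?_
          rw [← hUT]
          exact inf_le_inf_right T inf_le_left
        rw [this] at hU2
        have hθw0 : θ ww = 0 := by simpa using hU2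
        have : ww ∈ LinearMap.ker θ := hθw0
        rw [hkerθ] at this
        simpa using this
      have : Submodule.comap θ U = ⊥ := hessq _ hV'
      have hzb : z ∈ Submodule.comap θ U := by rw [Submodule.mem_comap, hz]; exact hu
      rw [this] at hzb
      have : z = 0 := by simpa using hzb
      rw [← hz, this, map_zero]
    exact hHmax.2 hMEss hHle
  -- retraction
  have hmem : ∀ p : P, θ (C.mkQ p) ∈ H := by
    intro p
    rw [← hrangeθ]
    exact ⟨C.mkQ p, rfl⟩
  refine ⟨H, hTH, hHEss.2, LinearMap.codRestrict H (θ ∘ₗ C.mkQ) hmem, ?_⟩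
  intro h
  apply Subtype.ext
  show θ (C.mkQ (h : P)) = (h : P)
  have : C.mkQ (h : P) = φ h := rfl
  rw [this]
  exact hθφ h

/-- Key fact: a monomorphism from a nonzero module into a module with no nonzero
projective submodules cannot factor through a projective module. -/
theorem cruxB (hfg : ∀ I : Ideal R, I.FG) (hRR : Module.Injective R R)
    {N₀ : Type} [AddCommGroup N₀] [Module R N₀]
    (hstrip : ∀ Q : Submodule R N₀, Module.Projective R ↥Q → Q = ⊥)
    {L : Type} [AddCommGroup L] [Module R L]
    {P : Type} [AddCommGroup P] [Module R P] (hP : Module.Projective R P)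
    (ι : L →ₗ[R] N₀) (hι : Function.Injective ι) (l₀ : L) (hl₀ : l₀ ≠ 0)
    (α : L →ₗ[R] P) (β : P →ₗ[R] N₀) (hfac : ∀ l, β (α l) = ι l) : False := by
  have hPinj := proj_imp_inj hfg hRR hP
  obtain ⟨H, hTH, hess, ρ, hρ⟩ := hull_split hPinj (LinearMap.range α)
  have hHproj : Module.Projective R ↥H :=
    Module.Projective.of_split H.subtype ρ (LinearMap.ext hρ)
  -- β is injective on H
  have hker : ∀ h : P, h ∈ H → β h = 0 → h = 0 := by
    intro h hhH hh
    have hU : H ⊓ LinearMap.ker β = ⊥ := by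
      refine hess _ inf_le_left ?_
      rw [Submodule.eq_bot_iff]
      rintro x ⟨⟨hx1, hx2⟩, hx3⟩
      obtain ⟨l, hl⟩ := hx3
      have : ι l = 0 := by rw [← hfac, hl]; exact hx2
      have hl0 : l = 0 := by
        apply hι
        rw [this, map_zero]
      rw [← hl, hl0, map_zero]
    have : h ∈ H ⊓ LinearMap.ker β := ⟨hhH, hh⟩
    rw [hU] at this
    simpa using this
  set βH : ↥H →ₗ[R] N₀ := β ∘ₗ H.subtype with hβH
  have hβHinj : Function.Injective βH := by
    rw [← LinearMap.ker_eq_bot, Submodule.eq_bot_iff]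
    intro h hh
    exact Subtype.ext (hker (h : P) h.2 hh)
  haveI := hHproj
  have hQproj : Module.Projective R ↥(LinearMap.range βH) :=
    Module.Projective.of_equiv (LinearEquiv.ofInjective βH hβHinj)
  have hbot := hstrip _ hQproj
  have hmem : ι l₀ ∈ LinearMap.range βH := by
    refine ⟨⟨α l₀, hTH ⟨l₀, rfl⟩⟩, ?_⟩
    show β (α l₀) = ι l₀
    exact hfac l₀
  rw [hbot] at hmem
  have : ι l₀ = 0 := by simpa using hmem
  exact hl₀ (hι (by rw [this, map_zero]))

end ModTheory

section CatPart

variable {R : Type} [Ring R]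

theorem projective_of_retract {X P : ModuleCat.{0} R} (u : X ⟶ P) (v : P ⟶ X)
    (huv : u ≫ v = 𝟙 X) (hP : Projective P) : Projective X where
  factors {E Z} f e he := by
    obtain ⟨f', hf'⟩ := hP.factors (v ≫ f) e
    exact ⟨u ≫ f', by rw [Category.assoc, hf', ← Category.assoc, huv, Category.id_comp]⟩

theorem projective_punit : Projective (ModuleCat.of R PUnit) :=
  (IsProjective.iff_projective _).mp
    (Module.projective_def.mpr ⟨0, fun x => Subsingleton.elim _ _⟩)

theorem projective_biprod {P Q : ModuleCat.{0} R} (hP : Projective P) (hQ : Projective Q) :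
    Projective (P ⊞ Q) where
  factors {E Z} f e he := by
    obtain ⟨f₁, h₁⟩ := hP.factors (Limits.biprod.inl ≫ f) e
    obtain ⟨f₂, h₂⟩ := hQ.factors (Limits.biprod.inr ≫ f) e
    refine ⟨Limits.biprod.desc f₁ f₂, ?_⟩
    apply Limits.biprod.hom_ext' <;>
      simp [h₁, h₂]

instance stableRel_congruence : Congruence (stableRel R) where
  equivalence := by
    intro X Y
    constructor
    · intro f
      exact ⟨ModuleCat.of R PUnit, 0, 0, projective_punit, by simp⟩
    · rintro f g ⟨P, a, b, hP, h⟩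
      refine ⟨P, a, -b, hP, ?_⟩
      rw [h, Preadditive.comp_neg]
      abel
    · rintro f g h ⟨P₁, a₁, b₁, hP₁, e₁⟩ ⟨P₂, a₂, b₂, hP₂, e₂⟩
      refine ⟨P₁ ⊞ P₂, Limits.biprod.lift a₁ a₂, Limits.biprod.desc b₁ b₂,
        projective_biprod hP₁ hP₂, ?_⟩
      rw [Limits.biprod.lift_desc, e₁, e₂]
      abel
  comp_left := by
    rintro X Y Z f g g' ⟨P, a, b, hP, h⟩
    refine ⟨P, f ≫ a, b, hP, ?_⟩
    rw [h, Preadditive.comp_add, Category.assoc]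
  comp_right := by
    rintro X Y Z f f' g ⟨P, a, b, hP, h⟩
    refine ⟨P, a, b ≫ g, hP, ?_⟩
    rw [h, Preadditive.add_comp, Category.assoc]

theorem projective_of_stable_id {X : ModuleCat.{0} R} (h : stableRel R (𝟙 X) 0) :
    Projective X := by
  obtain ⟨P, a, b, hP, he⟩ := h
  rw [zero_add] at he
  exact projective_of_retract a b he.symm hP

theorem stable_of_factor {X Y : ModuleCat.{0} R} (f : X ⟶ Y) {P : ModuleCat.{0} R}
    (hP : Projective P) (a : X ⟶ P) (b : P ⟶ Y) (h : f = a ≫ b) : stableRel R f 0 :=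
  ⟨P, a, b, hP, by rw [h, zero_add]⟩

/-- Decomposition of the identity associated to an `IsCompl` pair. -/
theorem isCompl_decomp {X : Type} [AddCommGroup X] [Module R X] {p q : Submodule R X}
    (h : IsCompl p q) (x : X) :
    x = ((p.linearProjOfIsCompl q h x : ↥p) : X) + ((q.linearProjOfIsCompl p h.symm x : ↥q) : X)
    := by
  have hx : x ∈ p ⊔ q := by rw [h.sup_eq_top]; trivial
  obtain ⟨y, hy, z, hz, rfl⟩ := Submodule.mem_sup.mp hx
  rw [map_add, map_add]
  rw [show p.linearProjOfIsCompl q h y = ⟨y, hy⟩ from Submodule.linearProjOfIsCompl_apply_left h ⟨y, hy⟩,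
    show p.linearProjOfIsCompl q h z = 0 from Submodule.linearProjOfIsCompl_apply_right h ⟨z, hz⟩,
    show q.linearProjOfIsCompl p h.symm y = 0 from
      Submodule.linearProjOfIsCompl_apply_right h.symm ⟨y, hy⟩,
    show q.linearProjOfIsCompl p h.symm z = ⟨z, hz⟩ from
      Submodule.linearProjOfIsCompl_apply_left h.symm ⟨z, hz⟩]
  simp

end CatPart

end Stmt15Aux

set_option maxHeartbeats 2000000 in
open Stmt15Aux in
theorem stmt15 (k : Type) [Field k]
    (A A' : Type) [Ring A] [Ring A'] [Algebra k A] [Algebra k A']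
    [FiniteDimensional k A] [FiniteDimensional k A']
    (hselfA : Module.Injective A A) (hselfA' : Module.Injective A' A')
    (hnspA : ∀ S : ModuleCat.{0} A, Simple S → ¬ Projective S)
    (hnspA' : ∀ S : ModuleCat.{0} A', Simple S → ¬ Projective S)
    (F : ModuleCat.{0} A ⥤ ModuleCat.{0} A') [F.Additive] [F.Linear k]
    (hproj : ∀ P : ModuleCat.{0} A, Projective P → Projective (F.obj P))
    (G : Quotient (stableRel A) ⥤ Quotient (stableRel A'))
    (hG : Quotient.functor (stableRel A) ⋙ G = F ⋙ Quotient.functor (stableRel A'))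
    (hGe : G.IsEquivalence) :
    ∀ L' : ModuleCat.{0} A', Simple L' →
      ∃ L : ModuleCat.{0} A, Simple L ∧
        ∃ (ΦL P' : ModuleCat.{0} A'), Indec ΦL ∧ ¬ Projective ΦL ∧ Projective P' ∧
          Nonempty (F.obj L ≅ ΦL ⊞ P') ∧ ∃ g : ΦL ⟶ L', Epi g := by
  intro L' hL'
  classical
  haveI := hGe
  haveI : IsNoetherian k A := isNoetherian_of_isNoetherianRing_of_finite k A
  haveI : IsNoetherian k A' := isNoetherian_of_isNoetherianRing_of_finite k A'
  haveI : IsNoetherian A A := isNoetherian_of_tower k inferInstance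
  haveI : IsNoetherian A' A' := isNoetherian_of_tower k inferInstance
  have hfgA : ∀ I : Ideal A, I.FG := fun I => IsNoetherian.noetherian I
  have hfgA' : ∀ I : Ideal A', I.FG := fun I => IsNoetherian.noetherian I
  set QA := Quotient.functor (stableRel A) with hQAdef
  set QA' := Quotient.functor (stableRel A') with hQA'def
  have eObj : ∀ M : ModuleCat.{0} A, G.obj (QA.obj M) = QA'.obj (F.obj M) := fun M =>
    Functor.congr_obj hG M
  have mapEq : ∀ {M N : ModuleCat.{0} A} (f : M ⟶ N),
      G.map (QA.map f) = eqToHom (eObj M) ≫ QA'.map (F.map f) ≫ eqToHom (eObj N).symm :=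
    fun {M N} f => Functor.congr_hom hG f
  have transfer : ∀ {M N : ModuleCat.{0} A} (u v : M ⟶ N),
      stableRel A' (F.map u) (F.map v) → stableRel A u v := by
    intro M N u v h
    have h1 : QA'.map (F.map u) = QA'.map (F.map v) :=
      (Quotient.functor_map_eq_iff (stableRel A') _ _).mpr h
    have h2 : G.map (QA.map u) = G.map (QA.map v) := by
      rw [mapEq u, mapEq v, h1]
    exact (Quotient.functor_map_eq_iff (stableRel A) _ _).mp (G.map_injective h2)
  -- the stable preimage of L'
  set N : ModuleCat.{0} A := (G.objPreimage (QA'.obj L')).as with hNdef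
  have hiso : G.obj (QA.obj N) ≅ QA'.obj L' := G.objObjPreimageIso (QA'.obj L')
  -- decompose N
  obtain ⟨E_N, Y_N, hcomplN, hprojEN, hstripN⟩ := lemmaZ hfgA hselfA (↑N)
  set N₀ : ModuleCat.{0} A := ModuleCat.of A ↥Y_N with hN₀def
  set σY : N₀ ⟶ N := ModuleCat.ofHom Y_N.subtype with hσY
  set πY : N ⟶ N₀ := ModuleCat.ofHom (Y_N.linearProjOfIsCompl E_N hcomplN) with hπY
  set σE : ModuleCat.of A ↥E_N ⟶ N := ModuleCat.ofHom E_N.subtype with hσE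
  set πE : N ⟶ ModuleCat.of A ↥E_N := ModuleCat.ofHom (E_N.linearProjOfIsCompl Y_N hcomplN.symm) with hπE
  have hprojEcat : Projective (ModuleCat.of A ↥E_N) := (IsProjective.iff_projective _).mp hprojEN
  have hdecompN : ∀ x : ↑N, x = σY (πY x) + σE (πE x) := fun x => isCompl_decomp hcomplN x
  have hσπ : σY ≫ πY = 𝟙 N₀ := by
    ext y
    exact congrArg Subtype.val (Submodule.linearProjOfIsCompl_apply_left hcomplN y)
  have hrelN : stableRel A (πY ≫ σY) (𝟙 N) := by
    refine ⟨ModuleCat.of A ↥E_N, πE, -σE, hprojEcat, ?_⟩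
    ext x
    show σY (πY x) = x + (-(σE (πE x)))
    rw [eq_add_neg_iff_add_eq]
    exact (hdecompN x).symm
  set jN : QA.obj N₀ ≅ QA.obj N :=
    { hom := QA.map σY
      inv := QA.map πY
      hom_inv_id := by rw [← QA.map_comp, hσπ, QA.map_id]
      inv_hom_id := by
        rw [← QA.map_comp,
          show QA.map (πY ≫ σY) = QA.map (𝟙 N) from
            (Quotient.functor_map_eq_iff _ _ _).mpr hrelN, QA.map_id] } with hjN
  have hL'notstable : ¬ stableRel A' (𝟙 L') 0 := fun h =>
    hnspA' L' hL' (projective_of_stable_id h)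
  -- Y_N is nonzero
  have hYNne : Y_N ≠ ⊥ := by
    intro hbot
    have hrelId : stableRel A (𝟙 N) 0 := by
      refine stable_of_factor _ hprojEcat πE σE ?_
      ext x
      show x = σE (πE x)
      have h := hdecompN x
      have hy : σY (πY x) = 0 := by
        have hm := (Submodule.eq_bot_iff Y_N).mp hbot _ (πY x).2
        show Y_N.subtype (πY x) = 0
        exact hm
      rw [hy, zero_add] at h
      exact h
    have h1 : QA.map (𝟙 N) = QA.map (0 : N ⟶ N) :=
      (Quotient.functor_map_eq_iff _ _ _).mpr hrelId
    have hexu : ∃ uu : F.obj N ⟶ L', QA'.map uu = eqToHom (eObj N).symm ≫ hiso.hom :=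
      Quot.exists_rep (eqToHom (eObj N).symm ≫ hiso.hom)
    obtain ⟨uu, huu⟩ := hexu
    have hexv : ∃ vv : L' ⟶ F.obj N, QA'.map vv = hiso.inv ≫ eqToHom (eObj N) :=
      Quot.exists_rep (hiso.inv ≫ eqToHom (eObj N))
    obtain ⟨vv, hvv⟩ := hexv
    have hIdL' : QA'.map (𝟙 L') = QA'.map (0 : L' ⟶ L') := by
      have c1 : QA'.map (𝟙 L') = hiso.inv ≫ G.map (QA.map (𝟙 N)) ≫ hiso.hom := by
        rw [QA.map_id, G.map_id, QA'.map_id, Category.id_comp, Iso.inv_hom_id]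
      rw [c1, h1, mapEq, F.map_zero]
      calc hiso.inv ≫ (eqToHom (eObj N) ≫ QA'.map (0 : F.obj N ⟶ F.obj N) ≫
              eqToHom (eObj N).symm) ≫ hiso.hom
          = (hiso.inv ≫ eqToHom (eObj N)) ≫ QA'.map (0 : F.obj N ⟶ F.obj N) ≫
              (eqToHom (eObj N).symm ≫ hiso.hom) := by simp only [Category.assoc]
        _ = QA'.map vv ≫ QA'.map (0 : F.obj N ⟶ F.obj N) ≫ QA'.map uu := by rw [huu, hvv]
        _ = QA'.map (vv ≫ (0 : F.obj N ⟶ F.obj N) ≫ uu) := by rw [QA'.map_comp, QA'.map_comp]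
        _ = QA'.map (0 : L' ⟶ L') := by rw [zero_comp, comp_zero]
    exact hL'notstable ((Quotient.functor_map_eq_iff _ _ _).mp hIdL')
  -- pick a simple submodule of N₀
  obtain ⟨x₀, hx₀mem, hx₀ne⟩ := (Submodule.ne_bot_iff Y_N).mp hYNne
  have hy₀ne : (⟨x₀, hx₀mem⟩ : ↥Y_N) ≠ 0 := fun h =>
    hx₀ne (by simpa using congrArg Subtype.val h)
  obtain ⟨S, hSsimple⟩ := exists_simple_submodule (R := A) k (X := ↥Y_N) _ hy₀ne
  set L : ModuleCat.{0} A := ModuleCat.of A ↥S with hLdef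
  haveI hLsimple : Simple L := simple_iff_isSimpleModule.mpr hSsimple
  set ι : L ⟶ N₀ := ModuleCat.ofHom S.subtype with hιdef
  set κ : QA'.obj (F.obj N₀) ≅ QA'.obj L' :=
    eqToIso (eObj N₀).symm ≪≫ G.mapIso jN ≪≫ hiso with hκ
  have hexw : ∃ w : F.obj L ⟶ L', QA'.map w = QA'.map (F.map ι) ≫ κ.hom :=
    Quot.exists_rep (QA'.map (F.map ι) ≫ κ.hom)
  obtain ⟨w, hw⟩ := hexw
  -- the strip property of Y_N at the module level
  have hstripN' : ∀ Q : Submodule A ↥Y_N, Module.Projective A ↥Q → Q = ⊥ := by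
    intro Q hQ
    haveI := hQ
    have hQ' : Module.Projective A ↥(Q.map Y_N.subtype) :=
      Module.Projective.of_equiv
        (Submodule.equivMapOfInjective Y_N.subtype Subtype.val_injective Q)
    have hbot := hstripN (Q.map Y_N.subtype) (Submodule.map_subtype_le _ _) hQ'
    rw [Submodule.eq_bot_iff]
    intro q hq
    have hmem : (q : ↑N) ∈ Q.map Y_N.subtype := ⟨q, hq, rfl⟩
    have hmem0 := (Submodule.eq_bot_iff _).mp hbot _ hmem
    exact Subtype.ext (by simpa using hmem0)
  -- the stable class of w is nonzero
  have keyW : ¬ stableRel A' w 0 := by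
    intro hrel
    have h1 : QA'.map w = QA'.map (0 : F.obj L ⟶ L') :=
      (Quotient.functor_map_eq_iff _ _ _).mpr hrel
    have hexkv : ∃ kv : L' ⟶ F.obj N₀, QA'.map kv = κ.inv := Quot.exists_rep κ.inv
    obtain ⟨kv, hkv⟩ := hexkv
    have h2 : QA'.map (F.map ι) = QA'.map ((0 : F.obj L ⟶ L') ≫ kv) := by
      have c1 : QA'.map (F.map ι) = (QA'.map (F.map ι) ≫ κ.hom) ≫ κ.inv := by simp
      rw [c1, ← hw, h1, ← hkv, ← QA'.map_comp]
    have h3 : QA'.map (F.map ι) = QA'.map (F.map (0 : L ⟶ N₀)) := by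
      rw [h2, zero_comp, F.map_zero]
    have h4 := transfer _ _ ((Quotient.functor_map_eq_iff _ _ _).mp h3)
    obtain ⟨Pm, a, b, hPm, heq⟩ := h4
    rw [zero_add] at heq
    have hPmod : Module.Projective A ↑Pm :=
      (IsProjective.iff_projective _).mpr hPm
    haveI : Nontrivial ↥S := @IsSimpleModule.nontrivial A _ ↥S _ _ hSsimple
    obtain ⟨l₀, hl₀⟩ := exists_ne (0 : ↥S)
    exact cruxB hfgA hselfA hstripN' hPmod S.subtype Subtype.val_injective l₀ hl₀ a.hom b.hom
      (fun l => (congrArg (fun (φ : L ⟶ N₀) => φ l) heq).symm)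
  -- decompose F L
  obtain ⟨E_X, Y_X, hcX, hprojEX, hstripX⟩ := lemmaZ hfgA' hselfA' (↑(F.obj L))
  set ΦL : ModuleCat.{0} A' := ModuleCat.of A' ↥Y_X with hΦLdef
  set P' : ModuleCat.{0} A' := ModuleCat.of A' ↥E_X with hP'def
  set σYX : ΦL ⟶ F.obj L := ModuleCat.ofHom Y_X.subtype with hσYX
  set πYX : F.obj L ⟶ ΦL := ModuleCat.ofHom (Y_X.linearProjOfIsCompl E_X hcX) with hπYX
  set σEX : P' ⟶ F.obj L := ModuleCat.ofHom E_X.subtype with hσEX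
  set πEX : F.obj L ⟶ P' := ModuleCat.ofHom (E_X.linearProjOfIsCompl Y_X hcX.symm) with hπEX
  have hprojP' : Projective P' := (IsProjective.iff_projective _).mp hprojEX
  have hdecompX : ∀ x : ↑(F.obj L), x = σYX (πYX x) + σEX (πEX x) := fun x =>
    isCompl_decomp hcX x
  have hstripX' : ∀ Q : Submodule A' ↥Y_X, Module.Projective A' ↥Q → Q = ⊥ := by
    intro Q hQ
    haveI := hQ
    have hQ' : Module.Projective A' ↥(Q.map Y_X.subtype) :=
      Module.Projective.of_equiv
        (Submodule.equivMapOfInjective Y_X.subtype Subtype.val_injective Q)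
    have hbot := hstripX (Q.map Y_X.subtype) (Submodule.map_subtype_le _ _) hQ'
    rw [Submodule.eq_bot_iff]
    intro q hq
    have hmem : (q : ↑(F.obj L)) ∈ Q.map Y_X.subtype := ⟨q, hq, rfl⟩
    have hmem0 := (Submodule.eq_bot_iff _).mp hbot _ hmem
    exact Subtype.ext (by simpa using hmem0)
  have idNotStable : ¬ stableRel A' (𝟙 (F.obj L)) 0 := by
    intro h
    have h0 : stableRel A' (F.map (𝟙 L)) (F.map (0 : L ⟶ L)) := by
      rw [F.map_id, F.map_zero]; exact h
    exact hnspA L hLsimple (projective_of_stable_id (transfer _ _ h0))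
  have hYXne : Y_X ≠ ⊥ := by
    intro hbot
    refine idNotStable (stable_of_factor _ hprojP' πEX σEX ?_)
    ext x
    show x = σEX (πEX x)
    have h := hdecompX x
    have hy : σYX (πYX x) = 0 := by
      have hm := (Submodule.eq_bot_iff Y_X).mp hbot _ (πYX x).2
      show Y_X.subtype (πYX x) = 0
      exact hm
    rw [hy, zero_add] at h
    exact h
  -- the dichotomy for idempotents of F L
  have dichot : ∀ e : F.obj L ⟶ F.obj L, e ≫ e = e →
      stableRel A' e 0 ∨ stableRel A' e (𝟙 (F.obj L)) := by
    intro e he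
    obtain ⟨ψ, hψ⟩ := G.map_surjective (eqToHom (eObj L) ≫ QA'.map e ≫ eqToHom (eObj L).symm)
    have hexg : ∃ g : L ⟶ L, QA.map g = ψ := Quot.exists_rep ψ
    obtain ⟨g, hg⟩ := hexg
    by_cases hg0 : g = 0
    · left
      rw [hg0] at hg
      have h2 : G.map (QA.map (0 : L ⟶ L)) =
          eqToHom (eObj L) ≫ QA'.map e ≫ eqToHom (eObj L).symm := by rw [hg, hψ]
      rw [mapEq] at h2
      simp only [← Category.assoc] at h2
      have h3 := (cancel_mono (eqToHom (eObj L).symm)).mp h2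
      have h4 := (cancel_epi (eqToHom (eObj L))).mp (by
        simpa only [Category.assoc] using h3)
      have h5 : stableRel A' e (F.map (0 : L ⟶ L)) :=
        (Quotient.functor_map_eq_iff _ _ _).mp h4.symm
      rw [F.map_zero] at h5
      exact h5
    · right
      haveI : IsIso g := isIso_of_hom_simple hg0
      haveI : IsIso ψ := by rw [← hg]; infer_instance
      have h5 : IsIso (QA'.map e) := by
        have hme : QA'.map e = eqToHom (eObj L).symm ≫ G.map ψ ≫ eqToHom (eObj L) := by
          rw [hψ]; simp
        rw [hme]; infer_instance
      have h6 : QA'.map e ≫ QA'.map e = QA'.map e ≫ 𝟙 _ := by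
        rw [← QA'.map_comp, he, Category.comp_id]
      have h7 : QA'.map e = 𝟙 _ := (cancel_epi (QA'.map e)).mp h6
      have h8 : QA'.map e = QA'.map (𝟙 (F.obj L)) := by rw [h7, QA'.map_id]
      exact (Quotient.functor_map_eq_iff _ _ _).mp h8
  -- the biproduct decomposition iso
  have hσπX : σYX ≫ πYX = 𝟙 ΦL := by
    ext y
    exact congrArg Subtype.val (Submodule.linearProjOfIsCompl_apply_left hcX y)
  have hσπEX : σYX ≫ πEX = 0 := by
    ext y
    exact congrArg Subtype.val (Submodule.linearProjOfIsCompl_apply_right hcX.symm y)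
  have hσπXE : σEX ≫ πYX = 0 := by
    ext y
    exact congrArg Subtype.val (Submodule.linearProjOfIsCompl_apply_right hcX y)
  have hσπEE : σEX ≫ πEX = 𝟙 P' := by
    ext y
    exact congrArg Subtype.val (Submodule.linearProjOfIsCompl_apply_left hcX.symm y)
  set bIso : F.obj L ≅ ΦL ⊞ P' :=
    { hom := Limits.biprod.lift πYX πEX
      inv := Limits.biprod.desc σYX σEX
      hom_inv_id := by
        rw [Limits.biprod.lift_desc]
        ext x
        show σYX (πYX x) + σEX (πEX x) = x
        exact (hdecompX x).symm
      inv_hom_id := by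
        apply Limits.biprod.hom_ext' <;> apply Limits.biprod.hom_ext <;>
          simp [hσπX, hσπEX, hσπXE, hσπEE] } with hbIso
  -- ΦL is nonzero
  have hPhiNotZero : ¬ Limits.IsZero ΦL := by
    intro hz
    apply hYXne
    have hid0 : (𝟙 ΦL : ΦL ⟶ ΦL) = 0 := hz.eq_of_src _ _
    rw [Submodule.eq_bot_iff]
    intro q hq
    have := congrArg (fun (φ : ΦL ⟶ ΦL) => φ ⟨q, hq⟩) hid0
    exact congrArg Subtype.val this
  -- projectivity of a summand gives triviality
  have zeroOfProj : ∀ (Z : ModuleCat.{0} A') (m : Z ⟶ ΦL), Function.Injective m →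
      Projective Z → Limits.IsZero Z := by
    intro Z m hminj hZproj
    have hZmod : Module.Projective A' ↑Z :=
      (IsProjective.iff_projective _).mpr hZproj
    haveI := hZmod
    have hQm : Module.Projective A' ↥(LinearMap.range m.hom) :=
      Module.Projective.of_equiv (LinearEquiv.ofInjective _ hminj)
    have hbot := hstripX' _ hQm
    have : ∀ z : ↑Z, m z = 0 := by
      intro z
      have : m z ∈ LinearMap.range m.hom := ⟨z, rfl⟩
      rw [hbot] at this
      simpa using this
    haveI : Subsingleton ↑Z := ⟨fun a b => hminj (by rw [this a, this b])⟩
    exact ModuleCat.isZero_of_subsingleton Z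
  -- Indec
  have hIndec : Indec ΦL := by
    refine ⟨hPhiNotZero, ?_⟩
    rintro Y₁ Z ⟨φiso⟩
    set ξ : F.obj L ≅ (Y₁ ⊞ Z) ⊞ P' :=
      bIso ≪≫ Limits.biprod.mapIso φiso (Iso.refl P') with hξ
    set e : F.obj L ⟶ F.obj L :=
      ξ.hom ≫ Limits.biprod.fst ≫ Limits.biprod.fst ≫ Limits.biprod.inl ≫
        Limits.biprod.inl ≫ ξ.inv with he_def
    have he : e ≫ e = e := by
      rw [he_def]
      simp only [Category.assoc, Iso.inv_hom_id_assoc, Limits.biprod.inl_fst_assoc]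
    rcases dichot e he with h0 | h1
    · left
      obtain ⟨P₀, a, b, hP₀, heq⟩ := h0
      rw [zero_add] at heq
      set r : Y₁ ⟶ F.obj L := Limits.biprod.inl ≫ Limits.biprod.inl ≫ ξ.inv with hr
      set s : F.obj L ⟶ Y₁ := ξ.hom ≫ Limits.biprod.fst ≫ Limits.biprod.fst with hs
      have hres : r ≫ e ≫ s = 𝟙 Y₁ := by
        simp [hr, he_def, hs]
      have hY₁proj : Projective Y₁ := by
        refine projective_of_retract (r ≫ a) (b ≫ s) ?_ hP₀
        rw [← hres, heq]
        simp only [Category.assoc]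
      set m : Y₁ ⟶ ΦL := Limits.biprod.inl ≫ φiso.inv with hm
      have hmsplit : m ≫ (φiso.hom ≫ Limits.biprod.fst) = 𝟙 Y₁ := by
        rw [hm]; simp
      have hminj : Function.Injective m := by
        intro z₁ z₂ hz
        have := congrArg (fun (ϕ : Y₁ ⟶ Y₁) => ϕ z₁) hmsplit
        have h2 := congrArg (fun (ϕ : Y₁ ⟶ Y₁) => ϕ z₂) hmsplit
        calc z₁ = (φiso.hom ≫ Limits.biprod.fst) (m z₁) := this.symm
          _ = (φiso.hom ≫ Limits.biprod.fst) (m z₂) := by rw [hz]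
          _ = z₂ := h2
      exact zeroOfProj Y₁ m hminj hY₁proj
    · right
      obtain ⟨P₀, a, b, hP₀, heq⟩ := h1
      set rZ : Z ⟶ F.obj L := Limits.biprod.inr ≫ Limits.biprod.inl ≫ ξ.inv with hrZ
      set sZ : F.obj L ⟶ Z := ξ.hom ≫ Limits.biprod.fst ≫ Limits.biprod.snd with hsZ
      have hrsZ : rZ ≫ sZ = 𝟙 Z := by
        simp [hrZ, hsZ]
      have hre : rZ ≫ e = 0 := by
        simp [hrZ, he_def]
      have h2 : rZ ≫ e = rZ + (rZ ≫ a) ≫ b := by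
        rw [heq]
        simp [Preadditive.comp_add]
      have h2' : rZ + (rZ ≫ a) ≫ b = 0 := by rw [← h2, hre]
      have h3 : rZ = (rZ ≫ a) ≫ (-b) := by
        rw [Preadditive.comp_neg]
        exact eq_neg_of_add_eq_zero_left h2'
      have hZproj : Projective Z := by
        refine projective_of_retract (rZ ≫ a) ((-b) ≫ sZ) ?_ hP₀
        have h4 : (rZ ≫ a) ≫ (-b) ≫ sZ = ((rZ ≫ a) ≫ (-b)) ≫ sZ := by
          simp only [Category.assoc]
        rw [h4, ← h3, hrsZ]
      set m : Z ⟶ ΦL := Limits.biprod.inr ≫ φiso.inv with hm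
      have hmsplit : m ≫ (φiso.hom ≫ Limits.biprod.snd) = 𝟙 Z := by
        rw [hm]; simp
      have hminj : Function.Injective m := by
        intro z₁ z₂ hz
        have ha1 := congrArg (fun (ϕ : Z ⟶ Z) => ϕ z₁) hmsplit
        have ha2 := congrArg (fun (ϕ : Z ⟶ Z) => ϕ z₂) hmsplit
        calc z₁ = (φiso.hom ≫ Limits.biprod.snd) (m z₁) := ha1.symm
          _ = (φiso.hom ≫ Limits.biprod.snd) (m z₂) := by rw [hz]
          _ = z₂ := ha2
      exact zeroOfProj Z m hminj hZproj
  -- ΦL is not projective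
  have hPhiNotProj : ¬ Projective ΦL := by
    intro hp
    apply hYXne
    have hmod : Module.Projective A' ↥Y_X := (IsProjective.iff_projective _).mpr hp
    exact hstripX Y_X (le_refl _) hmod
  -- the epimorphism onto L'
  set g : ΦL ⟶ L' := σYX ≫ w with hgdef
  have hgne : g ≠ 0 := by
    intro h0
    apply keyW
    refine stable_of_factor _ hprojP' πEX (σEX ≫ w) ?_
    ext x
    show w x = w (σEX (πEX x))
    have hd := hdecompX x
    calc w x = w (σYX (πYX x) + σEX (πEX x)) := by rw [← hd]
      _ = w (σYX (πYX x)) + w (σEX (πEX x)) := by rw [map_add]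
      _ = g (πYX x) + w (σEX (πEX x)) := rfl
      _ = w (σEX (πEX x)) := by
          rw [h0]
          show (0 : ↥Y_X →ₗ[A'] ↑L') (πYX x) + _ = _
          rw [LinearMap.zero_apply, zero_add]
  have hepi : Epi g := by
    rw [ModuleCat.epi_iff_surjective]
    haveI hsimp : IsSimpleModule A' ↑L' := (simple_iff_isSimpleModule' L').mp hL'
    have hrange : LinearMap.range g.hom ≠ ⊥ := by
      intro hr
      exact hgne (ModuleCat.hom_ext ((LinearMap.range_eq_bot.mp hr).trans rfl))
    have htop : LinearMap.range g.hom = ⊤ := by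
      rcases eq_bot_or_eq_top (LinearMap.range g.hom) with h | h
      · exact absurd h hrange
      · exact h
    exact LinearMap.range_eq_top.mp htop
  exact ⟨L, hLsimple, ΦL, P', hIndec, hPhiNotProj, hprojP', ⟨bIso⟩, g, hepi⟩
end
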